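/- arXiv:0707.0953 — 8 statements merged into one kernel-verified Lean document; each statement's English description precedes it below -/
import Mathlib

section
/- Every weighted lattice polynomial function p : L^n → L on a bounded distributive lattice L = [a,b] can be written in disjunctive normal form: there exists a set function α : 2^[n] → L such that p(x) = ⋁_{S ⊆ [n]} (α(S) ∧ ⋀_{i∈S} x_i). -/
open Finset MeasureTheory ProbabilityTheory

/-- Weighted lattice polynomial functions on the interval L = [a,b] ⊆ ℝ:
built inductively from projections, constants in [a,b], pointwise min and max. -/
inductive IsWLP (a b : ℝ) (n : ℕ) : ((Fin n → ℝ) → ℝ) → Prop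
  | proj (k : Fin n) : IsWLP a b n (fun x => x k)
  | const (c : ℝ) (hc : c ∈ Set.Icc a b) : IsWLP a b n (fun _ => c)
  | inf {p q} : IsWLP a b n p → IsWLP a b n q → IsWLP a b n (fun x => min (p x) (q x))
  | sup {p q} : IsWLP a b n p → IsWLP a b n q → IsWLP a b n (fun x => max (p x) (q x))

/-- The characteristic vector e_S of S ⊆ [n] in {a,b}^n. -/
def charVec (a b : ℝ) {n : ℕ} (S : Finset (Fin n)) : Fin n → ℝ := fun i => if i ∈ S then b else a

section Aux

variable {n : ℕ} {a b : ℝ} {x : Fin n → ℝ}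

lemma foldmin_le_of_mem {S : Finset (Fin n)} {k : Fin n} (hk : k ∈ S) :
    S.fold min b x ≤ x k :=
  (Finset.fold_min_le _).mpr (Or.inr ⟨k, hk, le_rfl⟩)

lemma foldmin_le_b {S : Finset (Fin n)} : S.fold min b x ≤ b :=
  (Finset.fold_min_le _).mpr (Or.inl le_rfl)

lemma a_le_foldmin (hab : a ≤ b) (hx : ∀ i, x i ∈ Set.Icc a b) {S : Finset (Fin n)} :
    a ≤ S.fold min b x :=
  (Finset.le_fold_min _).mpr ⟨hab, fun i _ => (hx i).1⟩

lemma foldmin_anti {S T : Finset (Fin n)} (hST : S ⊆ T) :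
    T.fold min b x ≤ S.fold min b x :=
  (Finset.le_fold_min _).mpr ⟨foldmin_le_b, fun i hi => foldmin_le_of_mem (hST hi)⟩

lemma foldmin_union {S T : Finset (Fin n)} :
    (S ∪ T).fold min b x = min (S.fold min b x) (T.fold min b x) := by
  apply le_antisymm
  · exact le_min (foldmin_anti Finset.subset_union_left)
      (foldmin_anti Finset.subset_union_right)
  · refine (Finset.le_fold_min _).mpr ⟨min_le_of_left_le foldmin_le_b, fun i hi => ?_⟩
    rcases Finset.mem_union.mp hi with h | h
    · exact min_le_of_left_le (foldmin_le_of_mem h)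
    · exact min_le_of_right_le (foldmin_le_of_mem h)

end Aux

/-- Disjunctive normal form of a weighted lattice polynomial function. -/
theorem wlp_disjunctive_form (a b : ℝ) (hab : a ≤ b) (n : ℕ)
    (p : (Fin n → ℝ) → ℝ) (hp : IsWLP a b n p) :
    ∃ α : Finset (Fin n) → ℝ, (∀ S, α S ∈ Set.Icc a b) ∧
      ∀ x : Fin n → ℝ, (∀ i, x i ∈ Set.Icc a b) →
        p x = (Finset.univ (α := Fin n)).powerset.sup' (Finset.powerset_nonempty _)
          (fun S => min (α S) (S.fold min b x)) := by
  induction hp with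
  | proj k =>
    refine ⟨fun S => if k ∈ S then b else a, fun S => ?_, fun x hx => ?_⟩
    · by_cases h : k ∈ S <;> simp [h, hab, le_refl]
    · apply le_antisymm
      · have hmem : ({k} : Finset (Fin n)) ∈ (Finset.univ (α := Fin n)).powerset :=
          Finset.mem_powerset.mpr (Finset.subset_univ _)
        have := Finset.le_sup' (f := fun S : Finset (Fin n) =>
          min (if k ∈ S then b else a) (S.fold min b x)) hmem
        refine le_trans ?_ this
        simp only [Finset.mem_singleton, if_pos rfl, if_true, Finset.fold_singleton]
        rw [min_eq_left (hx k).2, min_eq_right (hx k).2]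
      · refine Finset.sup'_le _ _ fun S _ => ?_
        by_cases h : k ∈ S
        · simp only [h, if_pos]
          exact min_le_of_right_le (foldmin_le_of_mem h)
        · simp only [h, if_neg, not_false_iff]
          exact min_le_of_left_le (hx k).1
  | const c hc =>
    refine ⟨fun _ => c, fun _ => hc, fun x hx => ?_⟩
    apply le_antisymm
    · have hmem : (∅ : Finset (Fin n)) ∈ (Finset.univ (α := Fin n)).powerset :=
        Finset.mem_powerset.mpr (Finset.empty_subset _)
      have := Finset.le_sup' (f := fun S : Finset (Fin n) =>
        min c (S.fold min b x)) hmem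
      simpa [min_eq_left hc.2] using this
    · exact Finset.sup'_le _ _ fun S _ => min_le_left _ _
  | inf hp hq ihp ihq =>
    obtain ⟨α, hα, hαeq⟩ := ihp
    obtain ⟨β, hβ, hβeq⟩ := ihq
    refine ⟨fun U => min (U.powerset.sup' (Finset.powerset_nonempty _) α)
        (U.powerset.sup' (Finset.powerset_nonempty _) β), fun U => ?_, fun x hx => ?_⟩
    · constructor
      · refine le_min ?_ ?_
        · exact le_trans (hα ∅).1 (Finset.le_sup' α (Finset.mem_powerset.mpr (Finset.empty_subset _)))
        · exact le_trans (hβ ∅).1 (Finset.le_sup' β (Finset.mem_powerset.mpr (Finset.empty_subset _)))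
      · exact min_le_of_left_le (Finset.sup'_le _ _ fun S _ => (hα S).2)
    · simp only [hαeq x hx, hβeq x hx]
      apply le_antisymm
      · obtain ⟨S, hS, hSeq⟩ := Finset.exists_mem_eq_sup'
          (Finset.powerset_nonempty (Finset.univ (α := Fin n)))
          (fun S => min (α S) (S.fold min b x))
        obtain ⟨T, hT, hTeq⟩ := Finset.exists_mem_eq_sup'
          (Finset.powerset_nonempty (Finset.univ (α := Fin n)))
          (fun S => min (β S) (S.fold min b x))
        rw [hSeq, hTeq]
        have hU : S ∪ T ∈ (Finset.univ (α := Fin n)).powerset :=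
          Finset.mem_powerset.mpr (Finset.subset_univ _)
        refine le_trans ?_ (Finset.le_sup' (f := fun U : Finset (Fin n) =>
          min (min (U.powerset.sup' (Finset.powerset_nonempty _) α)
            (U.powerset.sup' (Finset.powerset_nonempty _) β)) (U.fold min b x)) hU)
        have hαle : α S ≤ (S ∪ T).powerset.sup' (Finset.powerset_nonempty _) α :=
          Finset.le_sup' α (Finset.mem_powerset.mpr Finset.subset_union_left)
        have hβle : β T ≤ (S ∪ T).powerset.sup' (Finset.powerset_nonempty _) β :=
          Finset.le_sup' β (Finset.mem_powerset.mpr Finset.subset_union_right)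
        rw [foldmin_union]
        refine le_min (le_min ?_ ?_) ?_
        · exact min_le_of_left_le (min_le_of_left_le hαle)
        · exact min_le_of_right_le (min_le_of_left_le hβle)
        · exact le_min (min_le_of_left_le (min_le_right _ _))
            (min_le_of_right_le (min_le_right _ _))
      · refine Finset.sup'_le _ _ fun U hU => ?_
        obtain ⟨S, hS, hSeq⟩ := Finset.exists_mem_eq_sup' (Finset.powerset_nonempty U) α
        obtain ⟨T, hT, hTeq⟩ := Finset.exists_mem_eq_sup' (Finset.powerset_nonempty U) β
        refine le_min ?_ ?_
        · refine le_trans ?_ (Finset.le_sup' (f := fun S : Finset (Fin n) =>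
            min (α S) (S.fold min b x)) (Finset.mem_powerset.mpr (Finset.subset_univ S)))
          refine le_min (min_le_of_left_le (hSeq ▸ min_le_left _ _)) ?_
          exact min_le_of_right_le (foldmin_anti (Finset.mem_powerset.mp hS))
        · refine le_trans ?_ (Finset.le_sup' (f := fun S : Finset (Fin n) =>
            min (β S) (S.fold min b x)) (Finset.mem_powerset.mpr (Finset.subset_univ T)))
          refine le_min (min_le_of_left_le (hTeq ▸ min_le_right _ _)) ?_
          exact min_le_of_right_le (foldmin_anti (Finset.mem_powerset.mp hT))
  | sup hp hq ihp ihq =>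
    obtain ⟨α, hα, hαeq⟩ := ihp
    obtain ⟨β, hβ, hβeq⟩ := ihq
    refine ⟨fun U => max (α U) (β U), fun U =>
      ⟨le_max_of_le_left (hα U).1, max_le (hα U).2 (hβ U).2⟩, fun x hx => ?_⟩
    simp only [hαeq x hx, hβeq x hx]
    apply le_antisymm
    · refine max_le (Finset.sup'_le _ _ fun S hS => ?_) (Finset.sup'_le _ _ fun S hS => ?_)
      · exact le_trans (min_le_min_right _ (le_max_left _ _))
          (Finset.le_sup' (f := fun S => min (max (α S) (β S)) (S.fold min b x)) hS)
      · exact le_trans (min_le_min_right _ (le_max_right _ _))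
          (Finset.le_sup' (f := fun S => min (max (α S) (β S)) (S.fold min b x)) hS)
    · refine Finset.sup'_le _ _ fun U hU => ?_
      have : min (max (α U) (β U)) (U.fold min b x)
          = max (min (α U) (U.fold min b x)) (min (β U) (U.fold min b x)) :=
        inf_sup_right _ _ _
      rw [this]
      exact max_le_max (Finset.le_sup' (f := fun S => min (α S) (S.fold min b x)) hU)
        (Finset.le_sup' (f := fun S => min (β S) (S.fold min b x)) hU)
end

section
/- Every weighted lattice polynomial function p : L^n → L can be written in conjunctive normal form: there exists a set function β : 2^[n] → L such that p(x) = ⋀_{S ⊆ [n]} (β(S) ∨ ⋁_{i∈S} x_i). -/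
open Finset MeasureTheory ProbabilityTheory

lemma wlp_mono (a b : ℝ) (n : ℕ) {p} (hp : IsWLP a b n p) :
    ∀ x y : Fin n → ℝ, (∀ i, x i ≤ y i) → p x ≤ p y := by
  induction hp with
  | proj k => intro x y h; exact h k
  | const c hc => intro x y h; exact le_rfl
  | inf h1 h2 ih1 ih2 => intro x y h; exact min_le_min (ih1 x y h) (ih2 x y h)
  | sup h1 h2 ih1 ih2 => intro x y h; exact max_le_max (ih1 x y h) (ih2 x y h)

lemma wlp_mem (a b : ℝ) (n : ℕ) {p} (hp : IsWLP a b n p) :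
    ∀ x : Fin n → ℝ, (∀ i, x i ∈ Set.Icc a b) → p x ∈ Set.Icc a b := by
  induction hp with
  | proj k => intro x h; exact h k
  | const c hc => intro x h; exact hc
  | inf h1 h2 ih1 ih2 =>
    intro x h
    exact ⟨le_min (ih1 x h).1 (ih2 x h).1, min_le_of_left_le (ih1 x h).2⟩
  | sup h1 h2 ih1 ih2 =>
    intro x h
    exact ⟨le_max_of_le_left (ih1 x h).1, max_le (ih1 x h).2 (ih2 x h).2⟩

lemma charVec_mem (a b : ℝ) (hab : a ≤ b) {n : ℕ} (S : Finset (Fin n)) (i : Fin n) :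
    charVec a b S i ∈ Set.Icc a b := by
  unfold charVec; split <;> simp [hab, le_refl]

lemma charVec_mono (a b : ℝ) (hab : a ≤ b) {n : ℕ} {U V : Finset (Fin n)} (h : U ⊆ V)
    (i : Fin n) : charVec a b U i ≤ charVec a b V i := by
  unfold charVec
  by_cases hi : i ∈ U
  · simp [hi, h hi]
  · by_cases hv : i ∈ V <;> simp [hi, hv, hab]

lemma a_le_fold (a : ℝ) {n : ℕ} (S : Finset (Fin n)) (x : Fin n → ℝ) :
    a ≤ S.fold max a x := (Finset.le_fold_max _).mpr (Or.inl le_rfl)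

lemma mem_le_fold (a : ℝ) {n : ℕ} {S : Finset (Fin n)} (x : Fin n → ℝ) {i : Fin n}
    (hi : i ∈ S) : x i ≤ S.fold max a x :=
  (Finset.le_fold_max _).mpr (Or.inr ⟨i, hi, le_rfl⟩)

lemma fold_le (a : ℝ) {n : ℕ} {S : Finset (Fin n)} {x : Fin n → ℝ} {c : ℝ}
    (h1 : a ≤ c) (h2 : ∀ i ∈ S, x i ≤ c) : S.fold max a x ≤ c :=
  (Finset.fold_max_le _).mpr ⟨h1, h2⟩

lemma fold_union (a : ℝ) {n : ℕ} (S T : Finset (Fin n)) (x : Fin n → ℝ) :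
    (S ∪ T).fold max a x = max (S.fold max a x) (T.fold max a x) := by
  apply le_antisymm
  · refine fold_le a (le_max_of_le_left (a_le_fold a S x)) ?_
    intro i hi
    rcases Finset.mem_union.mp hi with h | h
    · exact le_max_of_le_left (mem_le_fold a x h)
    · exact le_max_of_le_right (mem_le_fold a x h)
  · refine max_le ?_ ?_ <;>
      exact fold_le a (a_le_fold a _ x)
        (fun i hi => mem_le_fold a x (Finset.mem_union.mpr (by first | exact Or.inl hi | exact Or.inr hi)))

lemma wlp_eval (a b : ℝ) (hab : a ≤ b) (n : ℕ) {p} (hp : IsWLP a b n p) :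
    ∀ x : Fin n → ℝ, (∀ i, x i ∈ Set.Icc a b) →
      p x = (Finset.univ (α := Fin n)).powerset.inf' (Finset.powerset_nonempty _)
        (fun S => max (p (charVec a b Sᶜ)) (S.fold max a x)) := by
  induction hp with
  | proj k =>
    intro x hx
    dsimp only
    apply le_antisymm
    · apply Finset.le_inf'
      intro S _
      by_cases hk : k ∈ S
      · exact le_max_of_le_right (mem_le_fold a x hk)
      · have : charVec a b Sᶜ k = b := by
          unfold charVec; simp [Finset.mem_compl, hk]
        rw [this]
        exact le_max_of_le_left (hx k).2
    · have hmem : ({k} : Finset (Fin n)) ∈ (Finset.univ (α := Fin n)).powerset :=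
        Finset.mem_powerset.mpr (Finset.subset_univ _)
      refine le_trans (Finset.inf'_le _ hmem) ?_
      have h1 : charVec a b ({k} : Finset (Fin n))ᶜ k = a := by
        unfold charVec; simp [Finset.mem_compl]
      have h2 : ({k} : Finset (Fin n)).fold max a x = max (x k) a := Finset.fold_singleton
      rw [h1, h2, max_eq_left (hx k).1, max_eq_right (hx k).1]
  | const c hc =>
    intro x hx
    dsimp only
    apply le_antisymm
    · exact Finset.le_inf' _ _ (fun S _ => le_max_left _ _)
    · have hmem : (∅ : Finset (Fin n)) ∈ (Finset.univ (α := Fin n)).powerset :=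
        Finset.mem_powerset.mpr (Finset.empty_subset _)
      refine le_trans (Finset.inf'_le _ hmem) ?_
      simp [Finset.fold_empty, max_eq_left hc.1]
  | inf h1 h2 ih1 ih2 =>
    intro x hx
    dsimp only
    rw [ih1 x hx, ih2 x hx]
    apply le_antisymm
    · apply Finset.le_inf'
      intro S hS
      rw [sup_inf_right]
      exact le_inf (le_trans inf_le_left (Finset.inf'_le _ hS))
        (le_trans inf_le_right (Finset.inf'_le _ hS))
    · refine le_inf ?_ ?_
      · apply Finset.le_inf'
        intro S hS
        exact le_trans (Finset.inf'_le _ hS) (sup_le_sup_right inf_le_left _)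
      · apply Finset.le_inf'
        intro S hS
        exact le_trans (Finset.inf'_le _ hS) (sup_le_sup_right inf_le_right _)
  | sup h1 h2 ih1 ih2 =>
    rename_i p₁ p₂
    intro x hx
    dsimp only
    rw [ih1 x hx, ih2 x hx]
    apply le_antisymm
    · apply Finset.le_inf'
      intro S hS
      refine max_le ?_ ?_
      · exact le_trans (Finset.inf'_le _ hS)
          (max_le_max (le_max_left _ _) le_rfl)
      · exact le_trans (Finset.inf'_le _ hS)
          (max_le_max (le_max_right _ _) le_rfl)
    · obtain ⟨S₀, hS₀, hA⟩ := Finset.exists_mem_eq_inf'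
        (Finset.powerset_nonempty (Finset.univ (α := Fin n)))
        (fun S => max (p₁ (charVec a b Sᶜ)) (S.fold max a x))
      obtain ⟨T₀, hT₀, hB⟩ := Finset.exists_mem_eq_inf'
        (Finset.powerset_nonempty (Finset.univ (α := Fin n)))
        (fun S => max (p₂ (charVec a b Sᶜ)) (S.fold max a x))
      rw [hA, hB]
      have hmem : S₀ ∪ T₀ ∈ (Finset.univ (α := Fin n)).powerset :=
        Finset.mem_powerset.mpr (Finset.subset_univ _)
      refine le_trans (Finset.inf'_le _ hmem) ?_
      have hc1 : p₁ (charVec a b (S₀ ∪ T₀)ᶜ) ≤ p₁ (charVec a b S₀ᶜ) :=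
        wlp_mono a b n h1 _ _
          (charVec_mono a b hab (Finset.compl_subset_compl.mpr Finset.subset_union_left))
      have hc2 : p₂ (charVec a b (S₀ ∪ T₀)ᶜ) ≤ p₂ (charVec a b T₀ᶜ) :=
        wlp_mono a b n h2 _ _
          (charVec_mono a b hab (Finset.compl_subset_compl.mpr Finset.subset_union_right))
      rw [fold_union]
      refine sup_le (sup_le ?_ ?_) (sup_le ?_ ?_)
      · exact le_sup_of_le_left (le_sup_of_le_left hc1)
      · exact le_sup_of_le_right (le_sup_of_le_left hc2)
      · exact le_sup_of_le_left le_sup_right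
      · exact le_sup_of_le_right le_sup_right

/-- Conjunctive normal form of a weighted lattice polynomial function. -/
theorem wlp_conjunctive_form (a b : ℝ) (hab : a ≤ b) (n : ℕ)
    (p : (Fin n → ℝ) → ℝ) (hp : IsWLP a b n p) :
    ∃ β : Finset (Fin n) → ℝ, (∀ S, β S ∈ Set.Icc a b) ∧
      ∀ x : Fin n → ℝ, (∀ i, x i ∈ Set.Icc a b) →
        p x = (Finset.univ (α := Fin n)).powerset.inf' (Finset.powerset_nonempty _)
          (fun S => max (β S) (S.fold max a x)) := by
  refine ⟨fun S => p (charVec a b Sᶜ), ?_, ?_⟩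
  · intro S
    exact wlp_mem a b n hp _ (charVec_mem a b hab Sᶜ)
  · exact wlp_eval a b hab n hp
end

section
/- Let X_1,...,X_n be independent L-valued random variables, X_i with c.d.f. F_i, and let p : L^n → L be a weighted lattice polynomial function with Y_p := p(X_1,...,X_n). Then the c.d.f. of Y_p satisfies F_p(y) = 1 − Σ_{S ⊆ [n]} [1 − H_{p(e_S)}(y)] · Π_{i∈[n]∖S} F_i(y) · Π_{i∈S} [1 − F_i(y)], where H_c(y) = 1 if y ≥ c and 0 otherwise. -/
open Finset MeasureTheory ProbabilityTheory

lemma wlp_key {a b : ℝ} {n : ℕ} {p : (Fin n → ℝ) → ℝ} (hp : IsWLP a b n p) (y : ℝ)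
    (x : Fin n → ℝ) (hx : ∀ i, x i ∈ Set.Icc a b) (S : Finset (Fin n))
    (hS : ∀ i, i ∈ S ↔ y < x i) : (p x ≤ y ↔ p (charVec a b S) ≤ y) := by
  induction hp with
  | proj k =>
    simp only [charVec]
    by_cases h : k ∈ S
    · have hy := (hS k).1 h
      simp only [h, if_true]
      constructor
      · intro hxy; exact absurd hxy (not_le.2 hy)
      · intro hby; exact absurd hby (not_le.2 (lt_of_lt_of_le hy (hx k).2))
    · have hy : x k ≤ y := not_lt.1 (fun h' => h ((hS k).2 h'))
      simp only [h, if_false]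
      exact ⟨fun _ => le_trans (hx k).1 hy, fun _ => hy⟩
  | const c hc => rfl
  | inf hp hq ihp ihq => simp only [min_le_iff, ihp, ihq]
  | sup hp hq ihp ihq => simp only [max_le_iff, ihp, ihq]

/-- C.d.f. of Y_p = p(X_1,...,X_n), disjunctive (product) form:
F_p(y) = 1 − Σ_{S⊆[n]} [1 − H_{p(e_S)}(y)] Π_{i∉S} F_i(y) Π_{i∈S} [1 − F_i(y)]. -/
theorem cdf_wlp_disjunctive {Ω : Type*} [MeasurableSpace Ω] (μ : Measure Ω)
    [IsProbabilityMeasure μ] (a b : ℝ) (hab : a ≤ b) (n : ℕ)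
    (X : Fin n → Ω → ℝ) (hX : ∀ i, Measurable (X i))
    (hrange : ∀ i ω, X i ω ∈ Set.Icc a b)
    (hind : iIndepFun X μ)
    (p : (Fin n → ℝ) → ℝ) (hp : IsWLP a b n p) (y : ℝ) :
    (μ {ω | p (fun i => X i ω) ≤ y}).toReal =
      1 - ∑ S ∈ (Finset.univ (α := Fin n)).powerset,
        (1 - (if p (charVec a b S) ≤ y then (1 : ℝ) else 0)) *
          ((∏ i ∈ Sᶜ, (μ {ω | X i ω ≤ y}).toReal) *
            ∏ i ∈ S, (1 - (μ {ω | X i ω ≤ y}).toReal)) := by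
  classical
  set C : Finset (Fin n) → Fin n → Set Ω :=
    fun S i => X i ⁻¹' (if i ∈ S then Set.Ioi y else Set.Iic y) with hC
  set A : Finset (Fin n) → Set Ω := fun S => ⋂ i, C S i with hA
  have hmemA : ∀ S ω, ω ∈ A S ↔ ∀ i, (i ∈ S ↔ y < X i ω) := by
    intro S ω
    simp only [hA, hC, Set.mem_iInter, Set.mem_preimage]
    constructor
    · intro h i
      by_cases hi : i ∈ S
      · have := h i; rw [if_pos hi] at this; exact ⟨fun _ => this, fun _ => hi⟩
      · have := h i; rw [if_neg hi] at this
        exact ⟨fun h' => absurd h' hi, fun h' => absurd h' (not_lt.2 this)⟩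
    · intro h i
      by_cases hi : i ∈ S
      · rw [if_pos hi]; exact (h i).1 hi
      · rw [if_neg hi]; exact not_lt.1 (fun h' => hi ((h i).2 h'))
  have hCmeas : ∀ S i, MeasurableSet (C S i) := by
    intro S i
    exact (hX i) (by by_cases hi : i ∈ S <;> simp [hi, measurableSet_Ioi, measurableSet_Iic])
  have hAmeas : ∀ S, MeasurableSet (A S) := fun S => MeasurableSet.iInter (hCmeas S)
  -- disjointness
  have hdisj : ∀ S T : Finset (Fin n), S ≠ T → Disjoint (A S) (A T) := by
    intro S T hST
    rw [Set.disjoint_left]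
    intro ω hS hT
    apply hST
    ext i
    rw [(hmemA S ω).1 hS i, (hmemA T ω).1 hT i]
  -- cover
  have hcover : (⋃ S ∈ (Finset.univ (α := Fin n)).powerset, A S) = Set.univ := by
    ext ω
    simp only [Set.mem_iUnion, Set.mem_univ, iff_true]
    refine ⟨Finset.univ.filter (fun i => y < X i ω), Finset.mem_powerset.2 (Finset.subset_univ _), ?_⟩
    rw [hmemA]
    intro i
    simp
  -- intersection with event
  have hinter : ∀ S : Finset (Fin n),
      A S ∩ {ω | p (fun i => X i ω) ≤ y} =
        if p (charVec a b S) ≤ y then A S else ∅ := by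
    intro S
    by_cases h : p (charVec a b S) ≤ y
    · rw [if_pos h]
      apply Set.inter_eq_left.2
      intro ω hω
      exact Set.mem_setOf.2 ((wlp_key hp y _ (fun i => hrange i ω) S ((hmemA S ω).1 hω)).2 h)
    · rw [if_neg h]
      apply Set.eq_empty_iff_forall_notMem.2
      rintro ω ⟨hω, hω2⟩
      exact h ((wlp_key hp y _ (fun i => hrange i ω) S ((hmemA S ω).1 hω)).1 hω2)
  -- measure of A S via independence
  have hmeasA : ∀ S : Finset (Fin n), μ (A S) = ∏ i, μ (C S i) := by
    intro S
    exact hind.meas_iInter (fun i =>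
      ⟨if i ∈ S then Set.Ioi y else Set.Iic y,
        by by_cases hi : i ∈ S <;> simp [hi, measurableSet_Ioi, measurableSet_Iic], rfl⟩)
  -- F_i notation
  set F : Fin n → ℝ := fun i => (μ {ω | X i ω ≤ y}).toReal with hFdef
  have hμC : ∀ S i, (μ (C S i)).toReal = if i ∈ S then 1 - F i else F i := by
    intro S i
    by_cases hi : i ∈ S
    · simp only [hi, if_true, hC]
      have h1 : X i ⁻¹' Set.Ioi y = ({ω | X i ω ≤ y})ᶜ := by
        ext ω; simp [not_le]
      have h2 : MeasurableSet {ω | X i ω ≤ y} := (hX i) measurableSet_Iic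
      rw [h1, measure_compl h2 (measure_ne_top μ _)]
      rw [measure_univ, ENNReal.toReal_sub_of_le prob_le_one ENNReal.one_ne_top,
        ENNReal.toReal_one]
    · simp only [hi, if_false, hC]
      rfl
  have hPA : ∀ S : Finset (Fin n), (μ (A S)).toReal =
      (∏ i ∈ Sᶜ, F i) * ∏ i ∈ S, (1 - F i) := by
    intro S
    rw [hmeasA, ENNReal.toReal_prod]
    rw [← Finset.prod_mul_prod_compl S (fun i => (μ (C S i)).toReal)]
    rw [mul_comm]
    congr 1
    · exact Finset.prod_congr rfl (fun i hi => by rw [hμC]; simp [Finset.mem_compl.1 hi])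
    · exact Finset.prod_congr rfl (fun i hi => by rw [hμC, if_pos hi])
  -- total mass 1
  have hsum1 : ∑ S ∈ (Finset.univ (α := Fin n)).powerset, (μ (A S)).toReal = 1 := by
    rw [← ENNReal.toReal_sum (fun S _ => measure_ne_top μ _)]
    rw [← measure_biUnion_finset
      (fun S _ T _ hST => hdisj S T hST) (fun S _ => hAmeas S), hcover, measure_univ,
      ENNReal.toReal_one]
  -- LHS via partition
  have hlhs : (μ {ω | p (fun i => X i ω) ≤ y}).toReal =
      ∑ S ∈ (Finset.univ (α := Fin n)).powerset,
        (if p (charVec a b S) ≤ y then (μ (A S)).toReal else 0) := by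
    have : {ω | p (fun i => X i ω) ≤ y} =
        ⋃ S ∈ (Finset.univ (α := Fin n)).powerset,
          (if p (charVec a b S) ≤ y then A S else ∅) := by
      conv_lhs => rw [← Set.univ_inter {ω | p (fun i => X i ω) ≤ y}, ← hcover]
      rw [Set.iUnion₂_inter]
      exact Set.iUnion₂_congr (fun S _ => hinter S)
    rw [this, measure_biUnion_finset, ENNReal.toReal_sum]
    · exact Finset.sum_congr rfl (fun S _ => by split <;> simp)
    · intro S _; split <;> simp [measure_ne_top]
    · intro S _ T _ hST
      refine Set.disjoint_of_subset ?_ ?_ (hdisj S T hST) <;> (dsimp only; split <;> simp)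
    · intro S _; split
      · exact hAmeas S
      · exact MeasurableSet.empty
  rw [hlhs]
  have hR : ∑ S ∈ (Finset.univ (α := Fin n)).powerset,
      (1 - (if p (charVec a b S) ≤ y then (1:ℝ) else 0)) *
        ((∏ i ∈ Sᶜ, F i) * ∏ i ∈ S, (1 - F i))
    = ∑ S ∈ (Finset.univ (α := Fin n)).powerset,
      (1 - (if p (charVec a b S) ≤ y then (1:ℝ) else 0)) * (μ (A S)).toReal :=
    Finset.sum_congr rfl (fun S _ => by rw [hPA])
  rw [hR]
  have key : (∑ S ∈ (Finset.univ (α := Fin n)).powerset,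
        (if p (charVec a b S) ≤ y then (μ (A S)).toReal else 0)) +
      ∑ S ∈ (Finset.univ (α := Fin n)).powerset,
        (1 - (if p (charVec a b S) ≤ y then (1:ℝ) else 0)) * (μ (A S)).toReal
      = ∑ S ∈ (Finset.univ (α := Fin n)).powerset, (μ (A S)).toReal := by
    rw [← Finset.sum_add_distrib]
    exact Finset.sum_congr rfl (fun S _ => by split <;> ring)
  rw [hsum1] at key
  linarith
end

section
/- With the same setup, the c.d.f. of Y_p also satisfies F_p(y) = Σ_{S ⊆ [n]} H_{p(e_{[n]∖S})}(y) · Π_{i∈S} F_i(y) · Π_{i∈[n]∖S} [1 − F_i(y)]. -/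
open Finset MeasureTheory ProbabilityTheory

/-- Threshold lemma: a WLP value crosses a threshold iff the WLP applied to the
collapsed {a,b}-vector does. -/
lemma wlp_threshold {a b : ℝ} {n : ℕ} {p : (Fin n → ℝ) → ℝ} (hp : IsWLP a b n p)
    (x : Fin n → ℝ) (hx : ∀ i, x i ∈ Set.Icc a b) (y : ℝ) :
    (p x ≤ y ↔ p (fun i => if x i ≤ y then a else b) ≤ y) := by
  induction hp with
  | proj k =>
    show x k ≤ y ↔ (if x k ≤ y then a else b) ≤ y
    by_cases h : x k ≤ y
    · rw [if_pos h]
      exact ⟨fun _ => le_trans (hx k).1 h, fun _ => h⟩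
    · rw [if_neg h]
      exact ⟨fun hk => absurd hk h, fun hb => absurd (le_trans (hx k).2 hb) h⟩
  | const c hc => simp
  | inf hp hq ihp ihq =>
    simp only [min_le_iff] at *
    tauto
  | sup hp hq ihp ihq =>
    simp only [max_le_iff] at *
    tauto

lemma charVec_eq_collapse {a b : ℝ} {n : ℕ} (x : Fin n → ℝ) (y : ℝ) :
    charVec a b (Finset.univ.filter (fun i => x i ≤ y))ᶜ
      = fun i => if x i ≤ y then a else b := by
  funext i
  simp only [charVec, Finset.mem_compl, Finset.mem_filter, Finset.mem_univ, true_and]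
  by_cases h : x i ≤ y <;> simp [h]

/-- C.d.f. of Y_p, conjunctive (product) form:
F_p(y) = Σ_{S⊆[n]} H_{p(e_{[n]∖S})}(y) Π_{i∈S} F_i(y) Π_{i∉S} [1 − F_i(y)]. -/
theorem cdf_wlp_conjunctive {Ω : Type*} [MeasurableSpace Ω] (μ : Measure Ω)
    [IsProbabilityMeasure μ] (a b : ℝ) (hab : a ≤ b) (n : ℕ)
    (X : Fin n → Ω → ℝ) (hX : ∀ i, Measurable (X i))
    (hrange : ∀ i ω, X i ω ∈ Set.Icc a b)
    (hind : iIndepFun X μ)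
    (p : (Fin n → ℝ) → ℝ) (hp : IsWLP a b n p) (y : ℝ) :
    (μ {ω | p (fun i => X i ω) ≤ y}).toReal =
      ∑ S ∈ (Finset.univ (α := Fin n)).powerset,
        (if p (charVec a b Sᶜ) ≤ y then (1 : ℝ) else 0) *
          ((∏ i ∈ S, (μ {ω | X i ω ≤ y}).toReal) *
            ∏ i ∈ Sᶜ, (1 - (μ {ω | X i ω ≤ y}).toReal)) := by
  classical
  set sets : Finset (Fin n) → Fin n → Set ℝ :=
    fun S i => if i ∈ S then Set.Iic y else Set.Ioi y with hsets
  set E : Finset (Fin n) → Set Ω := fun S => ⋂ i, X i ⁻¹' sets S i with hE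
  have hEmem : ∀ S ω, ω ∈ E S ↔ ∀ i, (X i ω ≤ y ↔ i ∈ S) := by
    intro S ω
    simp only [hE, Set.mem_iInter, Set.mem_preimage, hsets]
    constructor
    · intro h i
      specialize h i
      by_cases hi : i ∈ S
      · simp only [hi, if_true, Set.mem_Iic] at h
        exact ⟨fun _ => hi, fun _ => h⟩
      · simp only [hi, if_false, Set.mem_Ioi] at h
        exact ⟨fun hle => absurd hle (not_le.mpr h), fun h' => absurd h' hi⟩
    · intro h i
      by_cases hi : i ∈ S
      · simp only [hi, if_true, Set.mem_Iic]
        exact (h i).mpr hi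
      · simp only [hi, if_false, Set.mem_Ioi]
        exact lt_of_not_ge (fun hle => hi ((h i).mp hle))
  have hsetsMeas : ∀ S i, MeasurableSet (sets S i) := by
    intro S i
    by_cases hi : i ∈ S <;> simp [hsets, hi, measurableSet_Iic, measurableSet_Ioi]
  have hEMeas : ∀ S, MeasurableSet (E S) :=
    fun S => MeasurableSet.iInter fun i => (hX i) (hsetsMeas S i)
  -- the cover
  have hcover : {ω | p (fun i => X i ω) ≤ y} =
      ⋃ S ∈ (Finset.univ (α := Fin n)).powerset.filter
        (fun S => p (charVec a b Sᶜ) ≤ y), E S := by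
    ext ω
    simp only [Set.mem_setOf_eq, Set.mem_iUnion, Finset.mem_filter, Finset.mem_powerset,
      exists_prop]
    constructor
    · intro hF
      refine ⟨Finset.univ.filter (fun i => X i ω ≤ y), ⟨Finset.filter_subset _ _, ?_⟩, ?_⟩
      · rw [charVec_eq_collapse]
        exact (wlp_threshold hp _ (fun i => hrange i ω) y).mp hF
      · rw [hEmem]
        intro i; simp
    · rintro ⟨S, ⟨-, hcond⟩, hES⟩
      rw [hEmem] at hES
      have hSeq : Finset.univ.filter (fun i => X i ω ≤ y) = S := by
        ext i; simp [hES i]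
      rw [wlp_threshold hp _ (fun i => hrange i ω) y, ← charVec_eq_collapse (fun i => X i ω) y,
        hSeq]
      exact hcond
  -- disjointness
  have hdisj : Set.PairwiseDisjoint
      (↑((Finset.univ (α := Fin n)).powerset.filter (fun S => p (charVec a b Sᶜ) ≤ y)))
      E := by
    intro S hS T hT hST
    simp only [Function.onFun]
    rw [Set.disjoint_left]
    intro ω hωS hωT
    apply hST
    ext i
    rw [← (hEmem S ω).mp hωS i, (hEmem T ω).mp hωT i]
  have hmeasE : ∀ S, μ (E S) =
      (∏ i ∈ S, μ {ω | X i ω ≤ y}) * ∏ i ∈ Sᶜ, μ {ω | y < X i ω} := by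
    intro S
    have h1 : E S = ⋂ i ∈ (Finset.univ : Finset (Fin n)), X i ⁻¹' sets S i := by
      simp [hE]
    rw [h1, hind.measure_inter_preimage_eq_mul Finset.univ (fun i _ => hsetsMeas S i),
      ← Finset.prod_mul_prod_compl S]
    congr 1
    · apply Finset.prod_congr rfl
      intro i hi
      simp only [hsets, hi, if_true]
      rfl
    · apply Finset.prod_congr rfl
      intro i hi
      rw [Finset.mem_compl] at hi
      simp only [hsets, hi, if_false]
      rfl
  have hcompl : ∀ i : Fin n, (μ {ω | y < X i ω}).toReal = 1 - (μ {ω | X i ω ≤ y}).toReal := by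
    intro i
    have h1 : {ω | y < X i ω} = {ω | X i ω ≤ y}ᶜ := by
      ext ω; simp [not_le]
    have hm : MeasurableSet {ω | X i ω ≤ y} := (hX i) measurableSet_Iic
    rw [h1, measure_compl hm (measure_ne_top μ _), measure_univ,
      ENNReal.toReal_sub_of_le prob_le_one (by simp)]
    simp
  rw [hcover, measure_biUnion_finset hdisj (fun S _ => hEMeas S),
    ENNReal.toReal_sum (fun S _ => measure_ne_top μ _)]
  have hite : ∀ S : Finset (Fin n),
      (if p (charVec a b Sᶜ) ≤ y then (1 : ℝ) else 0) *
          ((∏ i ∈ S, (μ {ω | X i ω ≤ y}).toReal) *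
            ∏ i ∈ Sᶜ, (1 - (μ {ω | X i ω ≤ y}).toReal))
      = if p (charVec a b Sᶜ) ≤ y then
          ((∏ i ∈ S, (μ {ω | X i ω ≤ y}).toReal) *
            ∏ i ∈ Sᶜ, (1 - (μ {ω | X i ω ≤ y}).toReal)) else 0 := by
    intro S; split <;> simp
  simp_rw [hite]
  rw [← Finset.sum_filter]
  apply Finset.sum_congr rfl
  intro S _
  rw [hmeasE, ENNReal.toReal_mul, ENNReal.toReal_prod, ENNReal.toReal_prod]
  congr 1
  exact Finset.prod_congr rfl fun i _ => hcompl i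
end

section
/- The c.d.f. of Y_p can be written via the Möbius transform: F_p(y) = 1 − Σ_{S ⊆ [n]} m_{v_{p,y}}(S) Π_{i∈S} [1 − F_i(y)], where v_{p,y}(S) := 1 − H_{p(e_S)}(y) and m denotes the Möbius transform. -/
open Finset MeasureTheory ProbabilityTheory

lemma inner_aux {α : Type*} [DecidableEq α] (A T : Finset α) (hTA : T ⊆ A) :
    ∑ S ∈ A.powerset.filter (fun S => T ⊆ S), (-1:ℝ) ^ (S.card - T.card)
      = if T = A then 1 else 0 := by
  have key : ∑ S ∈ A.powerset.filter (fun S => T ⊆ S), (-1:ℝ) ^ (S.card - T.card)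
      = ∑ U ∈ (A \ T).powerset, (-1:ℝ) ^ U.card := by
    refine Finset.sum_nbij' (fun S => S \ T) (fun U => U ∪ T) ?_ ?_ ?_ ?_ ?_
    · intro S hS
      simp only [mem_filter, mem_powerset] at hS ⊢
      exact sdiff_subset_sdiff hS.1 le_rfl
    · intro U hU
      simp only [mem_powerset] at hU
      simp only [mem_filter, mem_powerset]
      exact ⟨union_subset (hU.trans (sdiff_subset)) hTA, subset_union_right⟩
    · intro S hS
      simp only [mem_filter, mem_powerset] at hS
      exact sdiff_union_of_subset hS.2
    · intro U hU
      simp only [mem_powerset] at hU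
      have hd : Disjoint U T := disjoint_of_subset_left hU sdiff_disjoint
      rw [union_sdiff_right, hd.sdiff_eq_left]
    · intro S hS
      simp only [mem_filter, mem_powerset] at hS
      rw [card_sdiff_of_subset hS.2]
  rw [key]
  have hz := @Finset.sum_powerset_neg_one_pow_card α _ (A \ T)
  have h2 : ((∑ m ∈ (A \ T).powerset, (-1 : ℤ) ^ m.card : ℤ) : ℝ)
      = ∑ U ∈ (A \ T).powerset, (-1:ℝ) ^ U.card := by push_cast; ring_nf
  rw [← h2, hz]
  have : A \ T = ∅ ↔ T = A := by
    rw [sdiff_eq_empty_iff_subset]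
    exact ⟨fun h => le_antisymm hTA h, fun h => h ▸ le_rfl⟩
  split_ifs with h1 h2 h2 <;> simp_all

lemma moebius_aux {α : Type*} [DecidableEq α] [Fintype α] (f : Finset α → ℝ) (A : Finset α) :
    ∑ S ∈ (Finset.univ (α := α)).powerset,
      (∑ T ∈ S.powerset, (-1:ℝ) ^ (S.card - T.card) * f T) * (if S ⊆ A then 1 else 0)
      = f A := by
  have h1 : ∑ S ∈ (Finset.univ (α := α)).powerset,
      (∑ T ∈ S.powerset, (-1:ℝ) ^ (S.card - T.card) * f T) * (if S ⊆ A then 1 else 0)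
      = ∑ S ∈ A.powerset, ∑ T ∈ S.powerset, (-1:ℝ) ^ (S.card - T.card) * f T := by
    simp only [mul_ite, mul_one, mul_zero]
    rw [← Finset.sum_filter]
    congr 1
    ext S
    simp [mem_powerset, mem_filter]
  rw [h1]
  rw [Finset.sum_comm' (t' := A.powerset) (s' := fun T => A.powerset.filter (fun S => T ⊆ S))
    (by intro S T; simp only [mem_powerset, mem_filter]; tauto)]
  have h2 : ∀ T ∈ A.powerset,
      ∑ S ∈ A.powerset.filter (fun S => T ⊆ S), (-1:ℝ) ^ (S.card - T.card) * f T
      = (if T = A then 1 else 0) * f T := by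
    intro T hT
    rw [← Finset.sum_mul, inner_aux A T (mem_powerset.mp hT)]
  rw [Finset.sum_congr rfl h2]
  simp [Finset.sum_ite_eq', mem_powerset]

lemma IsWLP.measurable {a b : ℝ} {n : ℕ} {p : (Fin n → ℝ) → ℝ} (hp : IsWLP a b n p) :
    Measurable p := by
  induction hp with
  | proj k => exact measurable_pi_apply k
  | const c hc => exact measurable_const
  | inf hp hq ihp ihq => exact ihp.min ihq
  | sup hp hq ihp ihq => exact ihp.max ihq

lemma wlp_level {a b : ℝ} {n : ℕ} {p : (Fin n → ℝ) → ℝ} (hp : IsWLP a b n p) (y : ℝ)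
    (x : Fin n → ℝ) (hx : ∀ i, x i ∈ Set.Icc a b) :
    (y < p x ↔ y < p (charVec a b (Finset.univ.filter (fun i => y < x i)))) := by
  induction hp with
  | proj k =>
    simp only [charVec, mem_filter, mem_univ, true_and]
    by_cases h : y < x k
    · simp only [h, if_true, true_iff]
      exact h.trans_le (hx k).2
    · simp only [h, if_false, false_iff, not_lt]
      exact (hx k).1.trans (not_lt.mp h)
  | const c hc => exact Iff.rfl
  | inf hp hq ihp ihq => simp only [lt_min_iff, ihp, ihq]
  | sup hp hq ihp ihq => simp only [lt_max_iff, ihp, ihq]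

/-- C.d.f. of Y_p via the Möbius transform of v_{p,y}(S) = 1 − H_{p(e_S)}(y):
F_p(y) = 1 − Σ_S m_{v_{p,y}}(S) Π_{i∈S} [1 − F_i(y)]. -/
theorem cdf_wlp_moebius {Ω : Type*} [MeasurableSpace Ω] (μ : Measure Ω)
    [IsProbabilityMeasure μ] (a b : ℝ) (hab : a ≤ b) (n : ℕ)
    (X : Fin n → Ω → ℝ) (hX : ∀ i, Measurable (X i))
    (hrange : ∀ i ω, X i ω ∈ Set.Icc a b)
    (hind : iIndepFun X μ)
    (p : (Fin n → ℝ) → ℝ) (hp : IsWLP a b n p) (y : ℝ) :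
    (μ {ω | p (fun i => X i ω) ≤ y}).toReal =
      1 - ∑ S ∈ (Finset.univ (α := Fin n)).powerset,
        (∑ T ∈ S.powerset, (-1 : ℝ) ^ (S.card - T.card) *
            (1 - (if p (charVec a b T) ≤ y then (1 : ℝ) else 0))) *
          ∏ i ∈ S, (1 - (μ {ω | X i ω ≤ y}).toReal) := by
  classical
  have hGmeas : ∀ i, MeasurableSet {ω | y < X i ω} := fun i => (hX i) measurableSet_Ioi
  have hFmeas : Measurable (fun ω i => X i ω) := measurable_pi_lambda _ hX
  have hPmeas : MeasurableSet {ω | y < p (fun i => X i ω)} :=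
    (hp.measurable.comp hFmeas) measurableSet_Ioi
  -- factor identity
  have hfac : ∀ i, 1 - (μ {ω | X i ω ≤ y}).toReal = (μ {ω | y < X i ω}).toReal := by
    intro i
    have hc : {ω | X i ω ≤ y} = {ω | y < X i ω}ᶜ := by ext ω; simp [not_lt]
    rw [hc, prob_compl_eq_one_sub (hGmeas i),
      ENNReal.toReal_sub_of_le prob_le_one ENNReal.one_ne_top, ENNReal.toReal_one]
    ring
  -- flip the indicator
  have hflip : ∀ c : ℝ, (1 - (if c ≤ y then (1:ℝ) else 0)) = if y < c then 1 else 0 := by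
    intro c
    by_cases h : c ≤ y
    · simp [h, not_lt.mpr h]
    · simp [h, not_le.mp h]
  -- complement on the left
  have hA : {ω | p (fun i => X i ω) ≤ y} = {ω | y < p (fun i => X i ω)}ᶜ := by
    ext ω; simp [not_lt]
  rw [hA, prob_compl_eq_one_sub hPmeas,
    ENNReal.toReal_sub_of_le prob_le_one ENNReal.one_ne_top, ENNReal.toReal_one]
  congr 1
  simp only [hfac, hflip]
  -- independence product
  have hiSmeas : ∀ S : Finset (Fin n), MeasurableSet (⋂ i ∈ S, {ω | y < X i ω}) :=
    fun S => MeasurableSet.biInter S.countable_toSet (fun i _ => hGmeas i)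
  have hprod : ∀ S : Finset (Fin n),
      (μ (⋂ i ∈ S, {ω | y < X i ω})).toReal = ∏ i ∈ S, (μ {ω | y < X i ω}).toReal := by
    intro S
    rw [hind.meas_biInter (S := S) (s := fun i => {ω | y < X i ω})
      (fun i _ => ⟨Set.Ioi y, measurableSet_Ioi, rfl⟩), ENNReal.toReal_prod]
  simp only [← hprod]
  -- integral computation
  calc (μ {ω | y < p (fun i => X i ω)}).toReal
      = ∫ ω, Set.indicator {ω | y < p (fun i => X i ω)} 1 ω ∂μ :=
        (integral_indicator_one hPmeas).symm
    _ = ∫ ω, ∑ S ∈ (Finset.univ (α := Fin n)).powerset,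
          (∑ T ∈ S.powerset, (-1:ℝ) ^ (S.card - T.card) *
            (if y < p (charVec a b T) then (1:ℝ) else 0)) *
          Set.indicator (⋂ i ∈ S, {ω | y < X i ω}) 1 ω ∂μ := by
        refine integral_congr_ae (Filter.Eventually.of_forall fun ω => ?_)
        have hmem : ∀ S : Finset (Fin n),
            Set.indicator (⋂ i ∈ S, {ω | y < X i ω}) (1 : Ω → ℝ) ω
            = if S ⊆ Finset.univ.filter (fun i => y < X i ω) then 1 else 0 := by
          intro S
          rw [Set.indicator_apply]
          congr 1
          simp only [Set.mem_iInter, Set.mem_setOf_eq, eq_iff_iff]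
          constructor
          · intro h i hi
            simp only [mem_filter, mem_univ, true_and]
            exact h i hi
          · intro h i hi
            exact (mem_filter.mp (h hi)).2
        simp only [hmem]
        rw [moebius_aux (fun T => if y < p (charVec a b T) then (1:ℝ) else 0)
          (Finset.univ.filter (fun i => y < X i ω))]
        rw [Set.indicator_apply]
        simp only [Set.mem_setOf_eq, Pi.one_apply]
        simp only [wlp_level hp y (fun i => X i ω) (fun i => hrange i ω)]
    _ = ∑ S ∈ (Finset.univ (α := Fin n)).powerset,
          (∑ T ∈ S.powerset, (-1:ℝ) ^ (S.card - T.card) *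
            (if y < p (charVec a b T) then (1:ℝ) else 0)) *
          (μ (⋂ i ∈ S, {ω | y < X i ω})).toReal := by
        rw [integral_finset_sum]
        · refine Finset.sum_congr rfl fun S _ => ?_
          rw [integral_const_mul, integral_indicator_one (hiSmeas S), Measure.real_def]
        · intro S _
          exact ((integrable_const (1:ℝ)).indicator (hiSmeas S)).const_mul _
end

section
/- The expected value of the Sugeno integral of a uniform random vector on [0,1]^n equals ∫_{[0,1]^n} S_μ(x) dx = Σ_{S ⊆ [n]} Σ_{i=0}^{|S|} binom(|S|, i) (−1)^i μ(S)^{n−|S|+i+1} / (n − |S| + i + 1). -/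
open Finset MeasureTheory

private lemma fold_min_measurable {n : ℕ} (S : Finset (Fin n)) :
    Measurable (fun x : Fin n → ℝ => S.fold min 1 x) := by
  classical
  induction S using Finset.induction with
  | empty => simpa using measurable_const
  | @insert a s ha ih =>
      simpa [Finset.fold_insert ha] using (measurable_pi_apply a).min ih

private lemma sugeno_measurable {n : ℕ} (m : Finset (Fin n) → ℝ) :
    Measurable (fun x : Fin n → ℝ =>
      (Finset.univ (α := Fin n)).powerset.sup' (Finset.powerset_nonempty _)
        (fun S => min (m S) (S.fold min 1 x))) := by
  have h := Finset.measurable_sup' (Finset.powerset_nonempty (Finset.univ (α := Fin n)))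
    (f := fun S (x : Fin n → ℝ) => min (m S) (S.fold min 1 x))
    (fun S _ => measurable_const.min (fold_min_measurable S))
  have heq : (fun x : Fin n → ℝ =>
      (Finset.univ (α := Fin n)).powerset.sup' (Finset.powerset_nonempty _)
        (fun S => min (m S) (S.fold min 1 x))) =
      (Finset.univ (α := Fin n)).powerset.sup' (Finset.powerset_nonempty _)
        (fun S (x : Fin n → ℝ) => min (m S) (S.fold min 1 x)) := by
    funext x
    rw [Finset.sup'_apply]
  rw [heq]
  exact h

private lemma sugeno_levelset_eq {n : ℕ} (m : Finset (Fin n) → ℝ)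
    (hmono : ∀ S T : Finset (Fin n), S ⊆ T → m S ≤ m T)
    {t : ℝ} (ht0 : 0 < t) (ht1 : t ≤ 1) :
    {x : Fin n → ℝ | t ≤ (Finset.univ (α := Fin n)).powerset.sup' (Finset.powerset_nonempty _)
          (fun S => min (m S) (S.fold min 1 x))} ∩ Set.Icc 0 1 =
      ⋃ S ∈ Finset.filter (fun S => t ≤ m S) (Finset.univ (α := Fin n)).powerset,
        Set.pi Set.univ (fun i => if i ∈ S then Set.Icc t 1 else Set.Ico 0 t) := by
  classical
  ext x
  simp only [Set.mem_inter_iff, Set.mem_setOf_eq, Set.mem_iUnion, Set.mem_pi, Set.mem_univ,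
    true_implies, Finset.mem_filter, Finset.mem_powerset, Finset.le_sup'_iff, Set.mem_Icc]
  constructor
  · rintro ⟨⟨S, -, hS⟩, hx0, hx1⟩
    rw [le_min_iff, Finset.le_fold_min] at hS
    obtain ⟨hmS, -, hall⟩ := hS
    refine ⟨Finset.univ.filter (fun i => t ≤ x i), ⟨Finset.subset_univ _, ?_⟩, ?_⟩
    · exact le_trans hmS (hmono _ _ (fun i hi => by
        simp only [Finset.mem_filter, Finset.mem_univ, true_and]; exact hall i hi))
    · intro i
      by_cases h : t ≤ x i
      · simp only [Finset.mem_filter, Finset.mem_univ, true_and, h, if_pos]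
        exact Set.mem_Icc.2 ⟨h, hx1 i⟩
      · simp only [Finset.mem_filter, Finset.mem_univ, true_and, h, if_neg, not_false_iff]
        exact Set.mem_Ico.2 ⟨hx0 i, lt_of_not_ge h⟩
  · rintro ⟨S, ⟨-, hmS⟩, hx⟩
    have hin : ∀ i ∈ S, t ≤ x i ∧ x i ≤ 1 := fun i hi => by
      have := hx i; rw [if_pos hi] at this; exact this
    have hout : ∀ i ∉ S, 0 ≤ x i ∧ x i < t := fun i hi => by
      have := hx i; rw [if_neg hi] at this; exact this
    refine ⟨⟨S, Finset.subset_univ _, ?_⟩, ?_, ?_⟩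
    · rw [le_min_iff, Finset.le_fold_min]
      exact ⟨hmS, ht1, fun i hi => (hin i hi).1⟩
    · intro i
      by_cases h : i ∈ S
      · exact le_trans ht0.le (hin i h).1
      · exact (hout i h).1
    · intro i
      by_cases h : i ∈ S
      · exact (hin i h).2
      · exact le_trans (hout i h).2.le ht1

private lemma sugeno_meas_union {n : ℕ} (m : Finset (Fin n) → ℝ)
    {t : ℝ} (ht0 : 0 < t) (ht1 : t ≤ 1) :
    volume (⋃ S ∈ Finset.filter (fun S => t ≤ m S) (Finset.univ (α := Fin n)).powerset,
        Set.pi Set.univ (fun i => if i ∈ S then Set.Icc t 1 else Set.Ico 0 t)) =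
      ∑ S ∈ (Finset.univ (α := Fin n)).powerset,
        if t ≤ m S then ENNReal.ofReal ((1-t)^S.card * t^(n - S.card)) else 0 := by
  classical
  rw [measure_biUnion_finset]
  · rw [Finset.sum_filter]
    refine Finset.sum_congr rfl fun S _ => ?_
    split_ifs with h
    · rw [volume_pi_pi]
      have hv : ∀ i : Fin n, volume (if i ∈ S then Set.Icc t 1 else Set.Ico 0 t) =
          if i ∈ S then ENNReal.ofReal (1 - t) else ENNReal.ofReal t := by
        intro i; split_ifs <;> simp [Real.volume_Icc, Real.volume_Ico]
      simp only [hv]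
      rw [Finset.prod_ite, Finset.prod_const, Finset.prod_const]
      have h1 : Finset.filter (fun i => i ∈ S) Finset.univ = S := by
        simp [Finset.filter_mem_eq_inter]
      have h2 : (Finset.filter (fun i => ¬ i ∈ S) Finset.univ).card = n - S.card := by
        rw [Finset.filter_not]
        simp [Finset.card_sdiff_of_subset (Finset.subset_univ S)]
      rw [h1, h2, ENNReal.ofReal_mul (pow_nonneg (by linarith) _),
        ← ENNReal.ofReal_pow (by linarith : (0:ℝ) ≤ 1 - t), ← ENNReal.ofReal_pow ht0.le]
    · rfl
  · intro S hS T hT hST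
    obtain ⟨i, hi⟩ : ∃ i, ¬ (i ∈ S ↔ i ∈ T) := by
      by_contra hc
      push_neg at hc
      exact hST (Finset.ext fun i => not_not.1 (by simpa using hc i) )
    rw [Function.onFun, Set.disjoint_left]
    intro x hxS hxT
    have h1 := hxS i (Set.mem_univ i)
    have h2 := hxT i (Set.mem_univ i)
    by_cases hiS : i ∈ S
    · have hiT : i ∉ T := fun hiT => hi ⟨fun _ => hiT, fun _ => hiS⟩
      simp only [if_pos hiS] at h1
      simp only [if_neg hiT] at h2
      exact absurd h2.2 (not_lt.2 h1.1)
    · have hiT : i ∈ T := by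
        by_contra hiT
        exact hi ⟨fun h => absurd h hiS, fun h => absurd h hiT⟩
      simp only [if_neg hiS] at h1
      simp only [if_pos hiT] at h2
      exact absurd h1.2 (not_lt.2 h2.1)
  · intro S _
    exact MeasurableSet.univ_pi fun i => by split_ifs <;> measurability

private lemma one_sub_pow_mul (s k : ℕ) (t : ℝ) :
    (1-t)^s * t^k = ∑ i ∈ Finset.range (s+1), (s.choose i : ℝ) * (-1)^i * t^(k+i) := by
  have h : (1 - t : ℝ) = -t + 1 := by ring
  rw [h, add_pow, Finset.sum_mul]
  refine Finset.sum_congr rfl fun i _ => ?_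
  rw [pow_add]
  ring

private lemma sugeno_single_int {b : ℝ} (hb0 : 0 ≤ b) (hb1 : b ≤ 1) (s k : ℕ) :
    ∫ t in Set.Ioc (0:ℝ) 1, Set.indicator (Set.Ioc 0 b)
        (fun t => (1-t)^s * t^k) t =
      ∑ i ∈ Finset.range (s+1),
        (s.choose i : ℝ) * (-1)^i * b^(k+i+1) / ((k+i+1 : ℕ) : ℝ) := by
  rw [setIntegral_indicator measurableSet_Ioc, Set.Ioc_inter_Ioc]
  have hm : max (0:ℝ) 0 = 0 := by simp
  rw [hm, min_eq_right hb1, ← intervalIntegral.integral_of_le hb0]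
  have hc : ∀ t ∈ Set.uIcc (0:ℝ) b, (1-t)^s * t^k
      = ∑ i ∈ Finset.range (s+1), (s.choose i : ℝ) * (-1)^i * t^(k+i) := fun t _ =>
    one_sub_pow_mul s k t
  rw [intervalIntegral.integral_congr hc, intervalIntegral.integral_finset_sum
    (fun i _ => ((intervalIntegral.intervalIntegrable_pow _).const_mul _))]
  refine Finset.sum_congr rfl fun i _ => ?_
  rw [intervalIntegral.integral_const_mul, integral_pow]
  rw [zero_pow (Nat.succ_ne_zero _)]
  push_cast
  ring

/-- Expected value of the Sugeno integral with respect to a fuzzy measure μ of a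
uniform random vector on [0,1]^n. -/
theorem sugeno_integral_expected_value (n : ℕ) (m : Finset (Fin n) → ℝ)
    (hrange : ∀ S, m S ∈ Set.Icc (0 : ℝ) 1)
    (hmono : ∀ S T : Finset (Fin n), S ⊆ T → m S ≤ m T)
    (hbot : m ∅ = 0) (htop : m Finset.univ = 1) :
    ∫ x in Set.Icc (0 : Fin n → ℝ) 1,
        (Finset.univ (α := Fin n)).powerset.sup' (Finset.powerset_nonempty _)
          (fun S => min (m S) (S.fold min 1 x)) =
      ∑ S ∈ (Finset.univ (α := Fin n)).powerset,
        ∑ i ∈ Finset.range (S.card + 1),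
          (S.card.choose i : ℝ) * (-1 : ℝ) ^ i *
            (m S) ^ (n - S.card + i + 1) / ((n - S.card + i + 1 : ℕ) : ℝ) := by
  classical
  set f : (Fin n → ℝ) → ℝ := fun x =>
    (Finset.univ (α := Fin n)).powerset.sup' (Finset.powerset_nonempty _)
      (fun S => min (m S) (S.fold min 1 x)) with hf
  have hmeas : Measurable f := sugeno_measurable m
  have f_nn : ∀ x, 0 ≤ f x := by
    intro x
    rw [hf]
    have h0 := Finset.le_sup' (fun S => min (m S) (S.fold min 1 x))
      (Finset.mem_powerset.2 (Finset.empty_subset (Finset.univ (α := Fin n))))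
    simpa [hbot] using h0
  have f_le1 : ∀ x, f x ≤ 1 := by
    intro x
    refine Finset.sup'_le _ _ fun S _ => le_trans (min_le_left _ _) (hrange S).2
  haveI : IsFiniteMeasure (volume.restrict (Set.Icc (0 : Fin n → ℝ) 1)) :=
    ⟨by rw [Measure.restrict_apply_univ]; exact isCompact_Icc.measure_lt_top⟩
  have hint : IntegrableOn f (Set.Icc (0 : Fin n → ℝ) 1) volume :=
    Integrable.mono' (integrable_const 1) hmeas.aestronglyMeasurable
      (ae_of_all _ fun x => by
        rw [Real.norm_eq_abs, abs_le]
        exact ⟨by linarith [f_nn x], f_le1 x⟩)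
  rw [hint.integral_eq_integral_Ioc_meas_le (ae_of_all _ f_nn) (ae_of_all _ f_le1)]
  have key : ∀ t ∈ Set.Ioc (0:ℝ) 1,
      ENNReal.toReal ((volume.restrict (Set.Icc (0 : Fin n → ℝ) 1)) {x | t ≤ f x}) =
      ∑ S ∈ (Finset.univ (α := Fin n)).powerset,
        Set.indicator (Set.Ioc 0 (m S)) (fun t => (1-t)^S.card * t^(n - S.card)) t := by
    intro t ht
    rw [Measure.restrict_apply (measurableSet_le measurable_const hmeas),
      sugeno_levelset_eq m hmono ht.1 ht.2, sugeno_meas_union m ht.1 ht.2,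
      ENNReal.toReal_sum (fun S _ => by
        split_ifs
        exacts [ENNReal.ofReal_ne_top, ENNReal.zero_ne_top])]
    refine Finset.sum_congr rfl fun S _ => ?_
    rw [Set.indicator_apply]
    by_cases h : t ≤ m S
    · rw [if_pos h, if_pos (Set.mem_Ioc.2 ⟨ht.1, h⟩), ENNReal.toReal_ofReal
        (mul_nonneg (pow_nonneg (by linarith [ht.2]) _) (pow_nonneg ht.1.le _))]
    · rw [if_neg h, if_neg (fun hc => h (Set.mem_Ioc.1 hc).2), ENNReal.toReal_zero]
  simp only [measureReal_def]
  rw [setIntegral_congr_fun measurableSet_Ioc key]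
  have hIntS : ∀ S ∈ (Finset.univ (α := Fin n)).powerset, IntegrableOn
      (fun t : ℝ => Set.indicator (Set.Ioc 0 (m S)) (fun t => (1-t)^S.card * t^(n - S.card)) t)
      (Set.Ioc (0:ℝ) 1) volume := by
    intro S _
    have hcont : Continuous fun t : ℝ => (1-t)^S.card * t^(n - S.card) := by fun_prop
    exact (hcont.integrableOn_Ioc).indicator measurableSet_Ioc
  rw [integral_finset_sum _ hIntS]
  exact Finset.sum_congr rfl fun S _ =>
    sugeno_single_int (hrange S).1 (hrange S).2 S.card (n - S.card)
end

section
/- The expected value of the Choquet integral of a uniform random vector on [0,1]^n equals ∫_{[0,1]^n} C_μ(x) dx = Σ_{S ⊆ [n]} μ(S) · (n − |S|)! |S|! / (n + 1)!. -/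
open Finset MeasureTheory


lemma sum_beta (mm : ℕ) : ∀ t : ℕ, ∑ j ∈ range (mm+1), (-1:ℝ)^j * (mm.choose j) / (t+j+1)
    = (t.factorial : ℝ) * mm.factorial / (t+mm+1).factorial := by
  induction mm with
  | zero =>
    intro t
    rw [Finset.sum_range_one, show t + 0 + 1 = t + 1 from rfl, Nat.factorial_succ]
    simp only [Nat.choose_self, Nat.factorial_zero, Nat.cast_one, mul_one, one_mul]
    push_cast
    rw [div_eq_div_iff (by positivity) (by positivity)]
    ring
  | succ k ih =>
    intro t
    have key : ∑ j ∈ range (k+2), (-1:ℝ)^j * ((k+1).choose j) / (t+j+1)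
        = (∑ j ∈ range (k+1), (-1:ℝ)^j * (k.choose j) / (t+j+1))
          - ∑ j ∈ range (k+1), (-1:ℝ)^j * (k.choose j) / ((t:ℝ)+1+j+1) := by
      rw [Finset.sum_range_succ' (fun j => (-1:ℝ)^j * ((k+1).choose j) / (t+j+1)) (k+1)]
      have pascal : ∀ i ∈ range (k+1), (-1:ℝ)^(i+1) * ((k+1).choose (i+1)) / ((t:ℝ)+(↑(i+1):ℝ)+1)
          = ((-1:ℝ)^(i+1) * (k.choose (i+1)) / ((t:ℝ)+(↑(i+1):ℝ)+1))
            + (-(-1:ℝ)^i * (k.choose i) / ((t:ℝ)+1+i+1)) := by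
        intro i _
        rw [Nat.choose_succ_succ]
        push_cast
        ring
      rw [Finset.sum_congr rfl pascal, Finset.sum_add_distrib]
      have gsum : (∑ i ∈ range (k+1), (-1:ℝ)^(i+1) * (k.choose (i+1)) / ((t:ℝ)+(↑(i+1):ℝ)+1))
            + (-1:ℝ)^0 * ((k+1).choose 0) / ((t:ℝ)+(↑(0:ℕ):ℝ)+1)
          = ∑ j ∈ range (k+1), (-1:ℝ)^j * (k.choose j) / ((t:ℝ)+j+1) := by
        have A := Finset.sum_range_succ' (fun j => (-1:ℝ)^j * (k.choose j) / ((t:ℝ)+j+1)) (k+1)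
        rw [Finset.sum_range_succ] at A
        simp only [Nat.choose_succ_self, Nat.cast_zero, mul_zero, zero_div, add_zero,
          Nat.choose_zero_right] at A
        simp only [Nat.choose_zero_right, Nat.cast_zero, add_zero]
        exact A.symm
      rw [add_assoc, add_comm (∑ i ∈ range (k+1), -(-1:ℝ)^i * (k.choose i) / ((t:ℝ)+1+i+1)), ← add_assoc, gsum]
      rw [sub_eq_add_neg, ← Finset.sum_neg_distrib]
      congr 1
      refine Finset.sum_congr rfl fun i _ => ?_
      ring
    have ih' := ih (t+1)
    push_cast at ih'
    rw [key, ih t, ih']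
    have h1 : ((t+(k+1)+1).factorial : ℝ) = ((t:ℝ)+k+2) * (t+k+1).factorial := by
      rw [show t+(k+1)+1 = (t+k+1)+1 by ring, Nat.factorial_succ]; push_cast; ring
    have h2 : ((t+1+k+1).factorial : ℝ) = ((t:ℝ)+k+2) * (t+k+1).factorial := by
      rw [show t+1+k+1 = (t+k+1)+1 by ring, Nat.factorial_succ]; push_cast; ring
    have h3 : (((k+1).factorial : ℝ)) = ((k:ℝ)+1) * k.factorial := by
      rw [Nat.factorial_succ]; push_cast; ring
    have h4 : (((t+1).factorial : ℝ)) = ((t:ℝ)+1) * t.factorial := by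
      rw [Nat.factorial_succ]; push_cast; ring
    have h5 : ((t+k+1).factorial : ℝ) = ((t:ℝ)+k+1) * (t+k).factorial := by
      rw [Nat.factorial_succ]; push_cast; ring
    rw [h1, h2, h3, h4, h5]
    have p1 : ((t+k).factorial : ℝ) ≠ 0 := by positivity
    have p2 : ((t:ℝ)+k+2) ≠ 0 := by positivity
    have p3 : ((t:ℝ)+k+1) ≠ 0 := by positivity
    field_simp
    ring


lemma fold_min_continuous (n : ℕ) (S : Finset (Fin n)) :
    Continuous (fun x : Fin n → ℝ => S.fold min 1 x) := by
  classical
  induction S using Finset.induction_on with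
  | empty => simpa using continuous_const
  | insert a s ha ih =>
    simp only [Finset.fold_insert ha]
    exact Continuous.min (continuous_apply a) ih

lemma integral_fold_min (n : ℕ) (S : Finset (Fin n)) :
    ∫ x in Set.Icc (0 : Fin n → ℝ) 1, S.fold min 1 x = 1 / (S.card + 1) := by
  classical
  have hc := fold_min_continuous n S
  have hmeas : MeasurableSet (Set.Icc (0 : Fin n → ℝ) 1) := measurableSet_Icc
  have hint : IntegrableOn (fun x : Fin n → ℝ => S.fold min 1 x) (Set.Icc 0 1) volume :=
    hc.continuousOn.integrableOn_compact isCompact_Icc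
  have f_nn : 0 ≤ᵐ[volume.restrict (Set.Icc (0 : Fin n → ℝ) 1)]
      (fun x : Fin n → ℝ => S.fold min 1 x) := by
    filter_upwards [ae_restrict_mem hmeas] with x hx
    have := hx.1
    exact (Finset.le_fold_min _).mpr ⟨zero_le_one, fun i _ => this i⟩
  rw [Integrable.integral_eq_integral_meas_lt hint f_nn]
  have hms : ∀ t : ℝ, MeasurableSet {a : Fin n → ℝ | t < S.fold min 1 a} :=
    fun t => measurableSet_lt measurable_const hc.measurable
  have key : ∀ t ∈ Set.Ioi (0:ℝ),
      ((volume.restrict (Set.Icc (0 : Fin n → ℝ) 1)) {a | t < S.fold min 1 a}).toReal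
        = Set.indicator (Set.Ioo (0:ℝ) 1) (fun t => (1-t)^S.card) t := by
    intro t ht
    rw [Measure.restrict_apply (hms t)]
    by_cases h1 : t < 1
    · have hset : ({a : Fin n → ℝ | t < S.fold min 1 a} ∩ Set.Icc 0 1)
          = Set.pi Set.univ (fun i => if i ∈ S then Set.Ioc t 1 else Set.Icc 0 1) := by
        ext x
        simp only [Set.mem_inter_iff, Set.mem_setOf_eq, Set.mem_Icc, Set.mem_pi, Set.mem_univ,
          forall_true_left, Finset.lt_fold_min, Pi.le_def]
        constructor
        · rintro ⟨⟨-, hS⟩, hx0, hx1⟩ i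
          by_cases hi : i ∈ S
          · simp only [hi, if_true, Set.mem_Ioc]
            exact ⟨hS i hi, hx1 i⟩
          · simp only [hi, if_false, Set.mem_Icc]
            exact ⟨hx0 i, hx1 i⟩
        · intro h
          refine ⟨⟨h1, fun i hi => ?_⟩, fun i => ?_, fun i => ?_⟩
          · have := h i; simp only [hi, if_true, Set.mem_Ioc] at this; exact this.1
          · have := h i
            by_cases hi : i ∈ S
            · simp only [hi, if_true, Set.mem_Ioc] at this
              have := this.1
              have ht' : (0:ℝ) < t := ht
              simpa using le_of_lt (lt_trans ht' ‹t < x i›)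
            · simp only [hi, if_false, Set.mem_Icc] at this; exact this.1
          · have := h i
            by_cases hi : i ∈ S
            · simp only [hi, if_true, Set.mem_Ioc] at this; exact this.2
            · simp only [hi, if_false, Set.mem_Icc] at this; exact this.2
      rw [hset, volume_pi_pi]
      have hval : ∀ i : Fin n, volume (if i ∈ S then Set.Ioc t 1 else Set.Icc (0:ℝ) 1)
          = if i ∈ S then ENNReal.ofReal (1-t) else 1 := by
        intro i
        by_cases hi : i ∈ S <;> simp [hi, Real.volume_Ioc, Real.volume_Icc]
      rw [Finset.prod_congr rfl (fun i _ => hval i), Finset.prod_ite_mem, Finset.univ_inter,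
        Finset.prod_const]
      rw [Set.indicator_of_mem (Set.mem_Ioo.mpr ⟨ht, h1⟩)]
      rw [ENNReal.toReal_pow, ENNReal.toReal_ofReal (by linarith)]
    · have hempty : ({a : Fin n → ℝ | t < S.fold min 1 a} ∩ Set.Icc 0 1) = ∅ := by
        ext x
        simp only [Set.mem_inter_iff, Set.mem_setOf_eq, Set.mem_empty_iff_false, iff_false,
          not_and]
        intro hlt
        exfalso
        have : S.fold min 1 x ≤ 1 := (Finset.fold_min_le _).mpr (Or.inl le_rfl)
        have : t < 1 := lt_of_lt_of_le hlt this
        linarith [not_lt.mp h1]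
      rw [hempty]
      simp only [measure_empty, ENNReal.toReal_zero]
      exact (Set.indicator_of_notMem (fun hmem => h1 hmem.2) _).symm
  simp only [measureReal_def]
  rw [setIntegral_congr_fun measurableSet_Ioi key]
  rw [setIntegral_indicator measurableSet_Ioo]
  have : Set.Ioi (0:ℝ) ∩ Set.Ioo 0 1 = Set.Ioo 0 1 := by
    rw [Set.inter_eq_right]; exact fun x hx => hx.1
  rw [this]
  rw [← integral_Ioc_eq_integral_Ioo, ← intervalIntegral.integral_of_le zero_le_one]
  rw [show (fun t : ℝ => (1-t)^S.card) = (fun t : ℝ => (fun u : ℝ => u ^ S.card) (1 - t)) from rfl]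
  rw [intervalIntegral.integral_comp_sub_left (fun u : ℝ => u ^ S.card) 1]
  simp [integral_pow]



lemma comb_main (n : ℕ) (m : Finset (Fin n) → ℝ) :
    ∑ S ∈ (Finset.univ (α := Fin n)).powerset,
        (∑ T ∈ S.powerset, (-1 : ℝ) ^ (S.card - T.card) * m T) * (1 / (S.card + 1))
      = ∑ S ∈ (Finset.univ (α := Fin n)).powerset,
        m S * (((n - S.card).factorial : ℝ) * (S.card.factorial : ℝ) /
          ((n + 1).factorial : ℝ)) := by
  classical
  simp_rw [Finset.sum_mul]
  rw [Finset.sum_comm' (s := (Finset.univ (α := Fin n)).powerset)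
    (t := fun S => S.powerset)
    (t' := (Finset.univ (α := Fin n)).powerset)
    (s' := fun T => (Finset.univ (α := Fin n)).powerset.filter (fun S => T ⊆ S))
    (by intro S T; simp only [Finset.mem_powerset, Finset.mem_filter]; constructor
        · rintro ⟨h1, h2⟩; exact ⟨⟨h1, h2⟩, h2.trans h1⟩
        · rintro ⟨⟨h1, h2⟩, h3⟩; exact ⟨h1, h2⟩)]
  refine Finset.sum_congr rfl fun T hT => ?_
  have hTn : T.card ≤ n := by
    simpa using Finset.card_le_card (Finset.mem_powerset.mp hT)
  have hbij : ∑ S ∈ (Finset.univ (α := Fin n)).powerset.filter (fun S => T ⊆ S),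
      (-1:ℝ)^(S.card - T.card) * m T * (1/(S.card+1))
      = ∑ U ∈ Tᶜ.powerset, (-1:ℝ)^U.card * m T * (1/((T.card + U.card : ℕ)+1)) := by
    refine Finset.sum_nbij' (fun S => S \ T) (fun U => U ∪ T) ?_ ?_ ?_ ?_ ?_
    · intro S hS
      rw [Finset.mem_powerset]
      intro x hx
      simp only [Finset.mem_sdiff] at hx
      simp [hx.2]
    · intro U hU
      simp only [Finset.mem_filter, Finset.mem_powerset]
      exact ⟨Finset.subset_univ _, Finset.subset_union_right⟩
    · intro S hS
      simp only [Finset.mem_filter, Finset.mem_powerset] at hS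
      exact Finset.sdiff_union_of_subset hS.2
    · intro U hU
      rw [Finset.mem_powerset] at hU
      refine Finset.union_sdiff_cancel_right ?_
      exact Finset.disjoint_left.mpr fun a ha hb => (Finset.mem_compl.mp (hU ha)) hb
    · intro S hS
      simp only [Finset.mem_filter, Finset.mem_powerset] at hS
      have hcard : (S \ T).card = S.card - T.card := Finset.card_sdiff_of_subset hS.2
      have hsum : T.card + (S \ T).card = S.card := by
        rw [hcard]
        exact Nat.add_sub_cancel' (Finset.card_le_card hS.2)
      rw [← hcard, hsum]
  rw [hbij, Finset.powerset_card_disjiUnion]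
  erw [Finset.sum_disjiUnion]
  have hcompl : Tᶜ.card = n - T.card := by
    simp [Finset.card_compl]
  have inner : ∀ j ∈ range (Tᶜ.card + 1),
      ∑ U ∈ Finset.powersetCard j Tᶜ, (-1:ℝ)^U.card * m T * (1/((T.card + U.card : ℕ)+1))
      = ((n - T.card).choose j : ℝ) * ((-1:ℝ)^j * m T * (1/((T.card + j : ℕ)+1))) := by
    intro j hj
    rw [Finset.sum_congr rfl (fun U hU => by
        rw [(Finset.mem_powersetCard.mp hU).2]), Finset.sum_const,
      Finset.card_powersetCard, hcompl, nsmul_eq_mul]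
  rw [Finset.sum_congr rfl inner, hcompl]
  have := sum_beta (n - T.card) T.card
  have goal2 : ∑ j ∈ range (n - T.card + 1),
      ((n - T.card).choose j : ℝ) * ((-1:ℝ)^j * m T * (1/((T.card + j : ℕ)+1)))
      = m T * ∑ j ∈ range (n - T.card + 1), (-1:ℝ)^j * ((n - T.card).choose j) / ((T.card : ℝ) + j + 1) := by
    rw [Finset.mul_sum]
    refine Finset.sum_congr rfl fun j _ => ?_
    push_cast
    ring
  rw [goal2, this]
  have hfix : T.card + (n - T.card) + 1 = n + 1 := by omega
  rw [hfix]
  ring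


/-- Expected value of the Choquet integral with respect to a fuzzy measure μ of a
uniform random vector on [0,1]^n, where the Choquet integral is
C_μ(x) = Σ_S m_μ(S) ⋀_{i∈S} x_i with m_μ the Möbius transform of μ. -/
theorem choquet_integral_expected_value (n : ℕ) (m : Finset (Fin n) → ℝ)
    (hrange : ∀ S, m S ∈ Set.Icc (0 : ℝ) 1)
    (hmono : ∀ S T : Finset (Fin n), S ⊆ T → m S ≤ m T)
    (hbot : m ∅ = 0) (htop : m Finset.univ = 1) :
    ∫ x in Set.Icc (0 : Fin n → ℝ) 1,
        ∑ S ∈ (Finset.univ (α := Fin n)).powerset,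
          (∑ T ∈ S.powerset, (-1 : ℝ) ^ (S.card - T.card) * m T) * (S.fold min 1 x) =
      ∑ S ∈ (Finset.univ (α := Fin n)).powerset,
        m S * (((n - S.card).factorial : ℝ) * (S.card.factorial : ℝ) /
          ((n + 1).factorial : ℝ)) := by
  classical
  have hint : ∀ S ∈ (Finset.univ (α := Fin n)).powerset,
      IntegrableOn (fun x : Fin n → ℝ =>
        (∑ T ∈ S.powerset, (-1 : ℝ) ^ (S.card - T.card) * m T) * (S.fold min 1 x))
        (Set.Icc 0 1) volume :=
    fun S _ => (continuous_const.mul (fold_min_continuous n S)).continuousOn.integrableOn_compact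
      isCompact_Icc
  rw [integral_finset_sum _ hint]
  have step : ∀ S ∈ (Finset.univ (α := Fin n)).powerset,
      ∫ x in Set.Icc (0 : Fin n → ℝ) 1,
        (∑ T ∈ S.powerset, (-1 : ℝ) ^ (S.card - T.card) * m T) * (S.fold min 1 x)
      = (∑ T ∈ S.powerset, (-1 : ℝ) ^ (S.card - T.card) * m T) * (1 / (S.card + 1)) := by
    intro S _
    rw [integral_const_mul, integral_fold_min]
  rw [Finset.sum_congr rfl step, comb_main]
end

section
/- (Mean time to failure, exponential model) If the component lifetimes X_i are independent with survival functions Pr[X_i > t] = e^{−λ_i t} (λ_i > 0) and the system lifetime is Y_p = p(X_1,...,X_n) for a weighted lattice polynomial p on L = [0,∞], then E[Y_p] = p(e_∅) + Σ_{∅ ≠ S ⊆ [n]} Σ_{T ⊆ S} (−1)^{|S|−|T|} (1 − e^{−λ(S) p(e_T)}) / λ(S), where λ(S) = Σ_{i∈S} λ_i. -/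
open Finset MeasureTheory ProbabilityTheory ENNReal

/-- Weighted lattice polynomial functions on L = [0,∞] = ℝ≥0∞:
built inductively from projections, constants, pointwise min and max. -/
inductive IsWLPE (n : ℕ) : ((Fin n → ℝ≥0∞) → ℝ≥0∞) → Prop
  | proj (k : Fin n) : IsWLPE n (fun x => x k)
  | const (c : ℝ≥0∞) : IsWLPE n (fun _ => c)
  | inf {p q} : IsWLPE n p → IsWLPE n q → IsWLPE n (fun x => min (p x) (q x))
  | sup {p q} : IsWLPE n p → IsWLPE n q → IsWLPE n (fun x => max (p x) (q x))

/-- The characteristic vector e_S of S ⊆ [n] in {0,∞}^n. -/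
noncomputable def charVecE {n : ℕ} (S : Finset (Fin n)) : Fin n → ℝ≥0∞ := fun i => if i ∈ S then ⊤ else 0

lemma IsWLPE.monotone {n : ℕ} {p} (hp : IsWLPE n p) : Monotone p := by
  induction hp with
  | proj k => exact fun x y h => h k
  | const c => exact monotone_const
  | inf _ _ h1 h2 => exact h1.min h2
  | sup _ _ h1 h2 => exact h1.max h2

lemma IsWLPE.measurable {n : ℕ} {p} (hp : IsWLPE n p) : Measurable p := by
  induction hp with
  | proj k => exact measurable_pi_apply k
  | const c => exact measurable_const
  | inf _ _ h1 h2 => exact h1.min h2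
  | sup _ _ h1 h2 => exact h1.max h2

lemma IsWLPE.le_bound {n : ℕ} {p} (hp : IsWLPE n p) (x : Fin n → ℝ≥0∞) :
    p x ≤ p (charVecE ∅) ⊔ ⨆ i, x i := by
  induction hp with
  | proj k => exact le_sup_of_le_right (le_iSup x k)
  | const c => exact le_sup_left
  | inf _ _ h1 h2 =>
      refine le_trans (min_le_min h1 h2) ?_
      rw [← sup_inf_right]
  | sup _ _ h1 h2 =>
      refine le_trans (max_le_max h1 h2) ?_
      rw [← sup_sup_distrib_right]

lemma IsWLPE.lt_iff {n : ℕ} {p} (hp : IsWLPE n p) (x : Fin n → ℝ≥0∞) (t : ℝ≥0∞) :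
    t < p x ↔ t < p (charVecE (univ.filter (fun i => t < x i))) := by
  induction hp with
  | proj k =>
      simp only [charVecE, mem_filter, mem_univ, true_and]
      by_cases h : t < x k
      · rw [if_pos h]
        exact ⟨fun _ => h.trans_le le_top, fun _ => h⟩
      · rw [if_neg h]
        simp [h]
  | const c => exact Iff.rfl
  | inf _ _ h1 h2 => simp only [lt_min_iff, h1, h2]
  | sup _ _ h1 h2 => simp only [lt_max_iff, h1, h2]


lemma exp_int_Ioi {a : ℝ} (ha : 0 < a) : ∫ x in Set.Ioi (0:ℝ), Real.exp (-a*x) = 1/a := by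
  have hderiv : ∀ x ∈ Set.Ici (0:ℝ), HasDerivAt (fun x => -(Real.exp (-a*x))/a) (Real.exp (-a*x)) x := by
    intro x _
    have h1 : HasDerivAt (fun x : ℝ => -a*x) (-a) x := by
      simpa using (hasDerivAt_id x).const_mul (-a)
    have h2 := (h1.exp.neg.div_const a)
    refine h2.congr_deriv ?_
    rw [eq_comm, eq_div_iff ha.ne']; ring
  have hint : IntegrableOn (fun x => Real.exp (-a*x)) (Set.Ioi (0:ℝ)) :=
    exp_neg_integrableOn_Ioi 0 ha
  have htend : Filter.Tendsto (fun x => -(Real.exp (-a*x))/a) Filter.atTop (nhds 0) := by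
    have : Filter.Tendsto (fun x : ℝ => Real.exp (-a*x)) Filter.atTop (nhds 0) :=
      Real.tendsto_exp_atBot.comp (Filter.tendsto_id.const_mul_atTop_of_neg (neg_neg_iff_pos.2 ha))
    simpa using (this.neg.div_const a)
  have := MeasureTheory.integral_Ioi_of_hasDerivAt_of_tendsto' hderiv hint htend
  rw [this]
  simp only [mul_zero, Real.exp_zero]
  field_simp
  ring

lemma exp_int_Ioo {a b : ℝ} (ha : 0 < a) (hb : 0 ≤ b) :
    ∫ x in Set.Ioo (0:ℝ) b, Real.exp (-a*x) = (1 - Real.exp (-a*b))/a := by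
  rw [← MeasureTheory.integral_Ioc_eq_integral_Ioo, ← intervalIntegral.integral_of_le hb]
  have := intervalIntegral.integral_comp_mul_left (a := (0:ℝ)) (b := b) (f := Real.exp)
    (c := -a) (by simpa using ha.ne')
  simp only [neg_mul] at this ⊢
  rw [this]
  rw [integral_exp]
  simp only [mul_zero, Real.exp_zero, smul_eq_mul, neg_zero]
  field_simp
  ring

lemma aux_mset (c : ℝ≥0∞) : MeasurableSet {t : ℝ | ENNReal.ofReal t < c} :=
  ENNReal.measurable_ofReal measurableSet_Iio

lemma aux_integrable {a : ℝ} (c : ℝ≥0∞) (ha : 0 < a) :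
    IntegrableOn (fun t => if ENNReal.ofReal t < c then Real.exp (-a * t) else 0) (Set.Ioi (0:ℝ)) := by
  refine Integrable.mono (exp_neg_integrableOn_Ioi 0 ha) ?_ ?_
  · exact ((Measurable.ite (aux_mset c) (Real.measurable_exp.comp (measurable_id.const_mul (-a)))
      measurable_const).aestronglyMeasurable)
  · refine Filter.Eventually.of_forall fun t => ?_
    by_cases h : ENNReal.ofReal t < c <;> simp [h, Real.norm_eq_abs, abs_of_nonneg (Real.exp_pos _).le, abs_of_nonneg]
    · positivity

lemma aux_if_indicator {c : ℝ≥0∞} (hc : c ≠ ⊤) (g : ℝ → ℝ) :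
    ∀ t ∈ Set.Ioi (0:ℝ), (if ENNReal.ofReal t < c then g t else 0) = (Set.Ioo (0:ℝ) c.toReal).indicator g t := by
  intro t ht
  rw [Set.indicator_apply]
  have h1 : ENNReal.ofReal t < c ↔ t < c.toReal := ENNReal.ofReal_lt_iff_lt_toReal (le_of_lt ht) hc
  have h2 : (0:ℝ) < t := ht
  simp [Set.mem_Ioo, h1, h2]

lemma aux_integral {a : ℝ} (c : ℝ≥0∞) (ha : 0 < a) :
    ∫ t in Set.Ioi (0:ℝ), (if ENNReal.ofReal t < c then Real.exp (-a * t) else 0) =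
      (if c = ⊤ then 1 else 1 - Real.exp (-a * c.toReal)) / a := by
  by_cases hc : c = ⊤
  · simp only [hc, ENNReal.ofReal_lt_top, if_true]
    exact exp_int_Ioi ha
  · rw [MeasureTheory.setIntegral_congr_fun measurableSet_Ioi (aux_if_indicator hc _),
      MeasureTheory.setIntegral_indicator measurableSet_Ioo]
    rw [if_neg hc]
    have : Set.Ioi (0:ℝ) ∩ Set.Ioo 0 c.toReal = Set.Ioo 0 c.toReal := by
      rw [Set.inter_eq_right]; exact Set.Ioo_subset_Ioi_self
    rw [this, exp_int_Ioo ha ENNReal.toReal_nonneg]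

lemma aux_integrable0 {c : ℝ≥0∞} (hc : c ≠ ⊤) :
    IntegrableOn (fun t => if ENNReal.ofReal t < c then (1:ℝ) else 0) (Set.Ioi (0:ℝ)) := by
  have h0 : IntegrableOn (fun _ : ℝ => (1:ℝ)) (Set.Ioo 0 c.toReal) := by
    refine MeasureTheory.integrableOn_const ?_
    rw [Real.volume_Ioo]; exact ENNReal.ofReal_ne_top
  have h2 := (h0.integrable_indicator measurableSet_Ioo).integrableOn (s := Set.Ioi (0:ℝ))
  exact MeasureTheory.integrableOn_congr_fun (aux_if_indicator hc _) measurableSet_Ioi |>.2 h2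

lemma aux_integral0 {c : ℝ≥0∞} (hc : c ≠ ⊤) :
    ∫ t in Set.Ioi (0:ℝ), (if ENNReal.ofReal t < c then (1:ℝ) else 0) = c.toReal := by
  rw [MeasureTheory.setIntegral_congr_fun measurableSet_Ioi (aux_if_indicator hc _),
    MeasureTheory.setIntegral_indicator measurableSet_Ioo]
  have : Set.Ioi (0:ℝ) ∩ Set.Ioo 0 c.toReal = Set.Ioo 0 c.toReal := by
    rw [Set.inter_eq_right]; exact Set.Ioo_subset_Ioi_self
  rw [this]
  simp [Real.volume_Ioo, ENNReal.toReal_ofReal ENNReal.toReal_nonneg]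


lemma exp_prod_sum {n : ℕ} (l : Fin n → ℝ) (t : ℝ) (S : Finset (Fin n)) :
    ∏ i ∈ S, Real.exp (-(l i) * t) = Real.exp (-(∑ i ∈ S, l i) * t) := by
  rw [← Real.exp_sum]
  congr 1
  rw [← Finset.sum_mul, Finset.sum_neg_distrib, neg_mul]

lemma aux_expand {n : ℕ} (l : Fin n → ℝ) (T : Finset (Fin n)) (t : ℝ) :
    (∏ i ∈ T, Real.exp (-(l i) * t)) * ∏ i ∈ univ \ T, (1 - Real.exp (-(l i) * t)) =
    ∑ S ∈ univ.powerset.filter (fun S => T ⊆ S),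
      (-1:ℝ)^(S.card - T.card) * Real.exp (-(∑ i ∈ S, l i) * t) := by
  rw [Finset.prod_sub (fun _ => (1:ℝ)) (fun i => Real.exp (-(l i) * t)) (univ \ T)]
  rw [Finset.mul_sum]
  refine Finset.sum_nbij' (i := fun U => T ∪ U) (j := fun S => S \ T) ?_ ?_ ?_ ?_ ?_
  · intro U hU
    simp only [Finset.mem_filter, Finset.mem_powerset]
    exact ⟨Finset.subset_univ _, Finset.subset_union_left⟩
  · intro S hS
    rw [Finset.mem_powerset]
    exact Finset.sdiff_subset_sdiff (Finset.subset_univ _) (Finset.Subset.refl _)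
  · intro U hU
    rw [Finset.mem_powerset] at hU
    exact Finset.union_sdiff_cancel_left (Finset.subset_sdiff.1 hU).2.symm
  · intro S hS
    simp only [Finset.mem_filter, Finset.mem_powerset] at hS
    exact Finset.union_sdiff_of_subset hS.2
  · intro U hU
    rw [Finset.mem_powerset] at hU
    have hdisj : Disjoint T U := (Finset.subset_sdiff.1 hU).2.symm
    have hcard : (T ∪ U).card - T.card = U.card := by
      rw [Finset.card_union_of_disjoint hdisj, Nat.add_sub_cancel_left]
    simp only [Finset.prod_const_one, mul_one]
    rw [hcard, ← exp_prod_sum l t (T ∪ U), Finset.prod_union hdisj]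
    ring

lemma aux_swap {n : ℕ} (F : Finset (Fin n) → Finset (Fin n) → ℝ) :
    ∑ T ∈ (univ : Finset (Fin n)).powerset,
      ∑ S ∈ univ.powerset.filter (fun S => T ⊆ S), F T S
    = ∑ S ∈ (univ : Finset (Fin n)).powerset, ∑ T ∈ S.powerset, F T S := by
  refine Finset.sum_comm' ?_
  intro T S
  simp only [Finset.mem_powerset, Finset.mem_filter, Finset.mem_powerset]
  constructor
  · rintro ⟨-, h2, h3⟩; exact ⟨h3, h2⟩
  · rintro ⟨h1, h2⟩; exact ⟨h1.trans h2, h2, h1⟩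


lemma aux_K_meas {Ω : Type*} [MeasurableSpace Ω]
    (μ : Measure Ω) [IsProbabilityMeasure μ] {n : ℕ}
    (X : Fin n → Ω → ℝ≥0∞) (hX : ∀ i, Measurable (X i))
    (hind : iIndepFun X μ)
    (l : Fin n → ℝ) (hl : ∀ i, 0 < l i)
    (hexp : ∀ i, ∀ t : ℝ, 0 ≤ t →
      (μ {ω | ENNReal.ofReal t < X i ω}).toReal = Real.exp (-(l i) * t))
    (t : ℝ) (ht : 0 ≤ t) (T : Finset (Fin n)) :
    μ {ω | Finset.univ.filter (fun i => ENNReal.ofReal t < X i ω) = T}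
      = ENNReal.ofReal ((∏ i ∈ T, Real.exp (-(l i) * t)) *
          ∏ i ∈ Finset.univ \ T, (1 - Real.exp (-(l i) * t))) := by
  classical
  set C : Fin n → Set Ω := fun i =>
    if i ∈ T then {ω | ENNReal.ofReal t < X i ω} else {ω | ENNReal.ofReal t < X i ω}ᶜ with hC
  have hset : {ω | Finset.univ.filter (fun i => ENNReal.ofReal t < X i ω) = T} = ⋂ i, C i := by
    ext ω
    simp only [Set.mem_setOf_eq, Finset.ext_iff, Finset.mem_filter, Finset.mem_univ, true_and,
      Set.mem_iInter]
    refine forall_congr' fun i => ?_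
    by_cases h : i ∈ T <;> simp [hC, h]
  have hμi : ∀ i, μ {ω | ENNReal.ofReal t < X i ω} = ENNReal.ofReal (Real.exp (-(l i) * t)) := by
    intro i
    rw [← ENNReal.ofReal_toReal (measure_ne_top μ _), hexp i t ht]
  have hmXi : ∀ i, MeasurableSet {ω | ENNReal.ofReal t < X i ω} := fun i =>
    (hX i) measurableSet_Ioi
  have hμC : ∀ i, μ (C i) = ENNReal.ofReal
      (if i ∈ T then Real.exp (-(l i) * t) else 1 - Real.exp (-(l i) * t)) := by
    intro i
    by_cases h : i ∈ T
    · simp only [hC, h, if_true]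
      exact hμi i
    · simp only [hC, h, if_false]
      rw [measure_compl (hmXi i) (measure_ne_top μ _), hμi i, measure_univ,
        ← ENNReal.ofReal_one, ← ENNReal.ofReal_sub _ (Real.exp_pos _).le]
  have hmeas : μ (⋂ i, C i) = ∏ i, μ (C i) := by
    refine hind.meas_iInter fun i => ?_
    simp only [hC]
    by_cases h : i ∈ T
    · rw [if_pos h]
      exact ⟨Set.Ioi (ENNReal.ofReal t), measurableSet_Ioi, rfl⟩
    · rw [if_neg h]
      exact ⟨(Set.Ioi (ENNReal.ofReal t))ᶜ, measurableSet_Ioi.compl, rfl⟩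
  rw [hset, hmeas]
  have : ∀ i, μ (C i) = ENNReal.ofReal
      (if i ∈ T then Real.exp (-(l i) * t) else 1 - Real.exp (-(l i) * t)) := hμC
  calc ∏ i, μ (C i)
      = ∏ i : Fin n, ENNReal.ofReal
          (if i ∈ T then Real.exp (-(l i) * t) else 1 - Real.exp (-(l i) * t)) :=
        Finset.prod_congr rfl fun i _ => hμC i
    _ = ENNReal.ofReal (∏ i : Fin n,
          (if i ∈ T then Real.exp (-(l i) * t) else 1 - Real.exp (-(l i) * t))) := by
        rw [ENNReal.ofReal_prod_of_nonneg]
        intro i _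
        by_cases h : i ∈ T
        · rw [if_pos h]; exact (Real.exp_pos _).le
        · rw [if_neg h]
          have hle : Real.exp (-(l i) * t) ≤ 1 := Real.exp_le_one_iff.2 (by nlinarith [hl i])
          linarith
    _ = ENNReal.ofReal ((∏ i ∈ T, Real.exp (-(l i) * t)) *
          ∏ i ∈ Finset.univ \ T, (1 - Real.exp (-(l i) * t))) := by
        congr 1
        rw [Finset.prod_ite, Finset.filter_mem_eq_inter, Finset.univ_inter, ← Finset.sdiff_eq_filter]




-- standalone test of aux_level given abstract facts
lemma aux_level {Ω : Type*} [MeasurableSpace Ω]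
    (μ : Measure Ω) [IsProbabilityMeasure μ] {n : ℕ}
    (X : Fin n → Ω → ℝ≥0∞) (hX : ∀ i, Measurable (X i))
    (c : Finset (Fin n) → ℝ≥0∞)
    (mK : ∀ t : ℝ, ∀ T : Finset (Fin n),
      MeasurableSet {ω | Finset.univ.filter (fun i => ENNReal.ofReal t < X i ω) = T})
    (Y : Ω → ℝ≥0∞)
    (hKY : ∀ t : ℝ, ∀ ω, (ENNReal.ofReal t < Y ω ↔
      ENNReal.ofReal t < c (Finset.univ.filter (fun i => ENNReal.ofReal t < X i ω))))
    (t : ℝ) :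
    μ {ω | ENNReal.ofReal t < Y ω}
      = ∑ T ∈ Finset.univ.powerset,
          (if ENNReal.ofReal t < c T then
            μ {ω | Finset.univ.filter (fun i => ENNReal.ofReal t < X i ω) = T} else 0) := by
  classical
  set K : Ω → Finset (Fin n) := fun ω => Finset.univ.filter (fun i => ENNReal.ofReal t < X i ω)
    with hK
  have hA : {ω | ENNReal.ofReal t < Y ω}
      = ⋃ T ∈ (Finset.univ : Finset (Fin n)).powerset,
          (if ENNReal.ofReal t < c T then {ω | K ω = T} else ∅) := by
    ext ω
    simp only [Set.mem_setOf_eq, Set.mem_iUnion]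
    rw [hKY t ω]
    constructor
    · intro h
      refine ⟨K ω, Finset.mem_powerset.2 (Finset.subset_univ _), ?_⟩
      rw [if_pos h]
      exact rfl
    · rintro ⟨T, -, hmem⟩
      by_cases h : ENNReal.ofReal t < c T
      · rw [if_pos h] at hmem
        have hKT : K ω = T := hmem
        show ENNReal.ofReal t < c (K ω)
        rw [hKT]; exact h
      · rw [if_neg h] at hmem
        exact absurd hmem (Set.notMem_empty ω)
  rw [hA, measure_biUnion_finset]
  · refine Finset.sum_congr rfl fun T _ => ?_
    by_cases h : ENNReal.ofReal t < c T
    · rw [if_pos h, if_pos h]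
    · rw [if_neg h, if_neg h, measure_empty]
  · intro T _ T' _ hne
    refine Set.disjoint_left.2 fun ω hω hω' => ?_
    by_cases h : ENNReal.ofReal t < c T
    · by_cases h' : ENNReal.ofReal t < c T'
      · simp only [if_pos h] at hω; simp only [if_pos h'] at hω'
        exact hne ((hω : K ω = T).symm.trans (hω' : K ω = T'))
      · simp only [if_neg h'] at hω'; exact hω'
    · simp only [if_neg h] at hω; exact hω
  · intro T _
    show MeasurableSet (if ENNReal.ofReal t < c T then {ω | K ω = T} else ∅)
    by_cases h : ENNReal.ofReal t < c T
    · rw [if_pos h]; exact mK t T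
    · rw [if_neg h]; exact MeasurableSet.empty

-- assume previous: aux_integrable, aux_integrable0, aux_integral, aux_integral0, aux_expand, aux_swap, aux_mset
noncomputable def JJ {n : ℕ} (l : Fin n → ℝ) (S : Finset (Fin n)) (d : ℝ≥0∞) : ℝ :=
  if S = (∅ : Finset (Fin n)) then d.toReal
  else (if d = ⊤ then 1 else 1 - Real.exp (-(∑ i ∈ S, l i) * d.toReal)) / (∑ i ∈ S, l i)

lemma aux_hST_int {n : ℕ} (l : Fin n → ℝ) (hl : ∀ i, 0 < l i) (S : Finset (Fin n)) (d : ℝ≥0∞)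
    (h : S ≠ ∅ ∨ d ≠ ⊤) :
    IntegrableOn (fun t => if ENNReal.ofReal t < d
      then Real.exp (-(∑ i ∈ S, l i) * t) else 0) (Set.Ioi (0:ℝ)) := by
  rcases S.eq_empty_or_nonempty with hS | hS
  · have hd : d ≠ ⊤ := h.resolve_left (not_not_intro hS)
    subst hS
    simp only [Finset.sum_empty, neg_zero, zero_mul, Real.exp_zero]
    exact aux_integrable0 hd
  · exact aux_integrable d (Finset.sum_pos (fun i _ => hl i) hS)

lemma aux_hST_val {n : ℕ} (l : Fin n → ℝ) (hl : ∀ i, 0 < l i) (S : Finset (Fin n)) (d : ℝ≥0∞)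
    (h : S ≠ ∅ ∨ d ≠ ⊤) :
    ∫ t in Set.Ioi (0:ℝ), (if ENNReal.ofReal t < d
      then Real.exp (-(∑ i ∈ S, l i) * t) else 0) = JJ l S d := by
  rcases S.eq_empty_or_nonempty with hS | hS
  · have hd : d ≠ ⊤ := h.resolve_left (not_not_intro hS)
    subst hS
    simp only [Finset.sum_empty, neg_zero, zero_mul, Real.exp_zero, JJ, if_pos rfl]
    exact aux_integral0 hd
  · rw [JJ, if_neg hS.ne_empty]
    exact aux_integral d (Finset.sum_pos (fun i _ => hl i) hS)

lemma aux_gT_decomp {n : ℕ} (l : Fin n → ℝ) (d : ℝ≥0∞) (T : Finset (Fin n)) (t : ℝ) :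
    (if ENNReal.ofReal t < d then
      (∏ i ∈ T, Real.exp (-(l i) * t)) * ∏ i ∈ univ \ T, (1 - Real.exp (-(l i) * t)) else 0)
    = ∑ S ∈ univ.powerset.filter (fun S => T ⊆ S),
        (-1:ℝ)^(S.card - T.card) *
          (if ENNReal.ofReal t < d then Real.exp (-(∑ i ∈ S, l i) * t) else 0) := by
  by_cases h : ENNReal.ofReal t < d
  · simp only [if_pos h]
    exact aux_expand l T t
  · simp only [if_neg h, mul_zero, Finset.sum_const_zero]

lemma aux_IT_int {n : ℕ} (l : Fin n → ℝ) (hl : ∀ i, 0 < l i) (d : ℝ≥0∞) (T : Finset (Fin n))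
    (h : T ≠ ∅ ∨ d ≠ ⊤) :
    IntegrableOn (fun t => if ENNReal.ofReal t < d then
      (∏ i ∈ T, Real.exp (-(l i) * t)) * ∏ i ∈ univ \ T, (1 - Real.exp (-(l i) * t)) else 0)
      (Set.Ioi (0:ℝ)) := by
  have heq : ∀ t : ℝ, _ = _ := aux_gT_decomp l d T
  rw [MeasureTheory.integrableOn_congr_fun_ae (Filter.Eventually.of_forall fun t => heq t)]
  refine MeasureTheory.integrable_finset_sum _ fun S hS => ?_
  simp only [Finset.mem_filter, Finset.mem_powerset] at hS
  refine Integrable.const_mul ?_ _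
  refine aux_hST_int l hl S d ?_
  rcases h with h | h
  · exact Or.inl fun hSe => h (Finset.subset_empty.1 (hSe ▸ hS.2))
  · exact Or.inr h

lemma aux_IT_val {n : ℕ} (l : Fin n → ℝ) (hl : ∀ i, 0 < l i) (d : ℝ≥0∞) (T : Finset (Fin n))
    (h : T ≠ ∅ ∨ d ≠ ⊤) :
    ∫ t in Set.Ioi (0:ℝ), (if ENNReal.ofReal t < d then
      (∏ i ∈ T, Real.exp (-(l i) * t)) * ∏ i ∈ univ \ T, (1 - Real.exp (-(l i) * t)) else 0)
    = ∑ S ∈ univ.powerset.filter (fun S => T ⊆ S),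
        (-1:ℝ)^(S.card - T.card) * JJ l S d := by
  rw [MeasureTheory.integral_congr_ae (Filter.Eventually.of_forall fun t => aux_gT_decomp l d T t)]
  have hSne : ∀ S ∈ univ.powerset.filter (fun S => T ⊆ S), (S ≠ ∅ ∨ d ≠ ⊤) := by
    intro S hS
    simp only [Finset.mem_filter, Finset.mem_powerset] at hS
    rcases h with h | h
    · exact Or.inl fun hSe => h (Finset.subset_empty.1 (hSe ▸ hS.2))
    · exact Or.inr h
  rw [MeasureTheory.integral_finset_sum _ fun S hS =>
    (aux_hST_int l hl S d (hSne S hS)).const_mul _]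
  refine Finset.sum_congr rfl fun S hS => ?_
  rw [MeasureTheory.integral_const_mul, aux_hST_val l hl S d (hSne S hS)]



lemma aux_total {n : ℕ} (l : Fin n → ℝ) (hl : ∀ i, 0 < l i)
    (c : Finset (Fin n) → ℝ≥0∞) (hc : c ∅ ≠ ⊤) :
    ∑ T ∈ (univ : Finset (Fin n)).powerset,
      ∫ t in Set.Ioi (0:ℝ), (if ENNReal.ofReal t < c T then
        (∏ i ∈ T, Real.exp (-(l i) * t)) * ∏ i ∈ univ \ T, (1 - Real.exp (-(l i) * t)) else 0)
    = (c ∅).toReal +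
      ∑ S ∈ (univ : Finset (Fin n)).powerset.filter (fun S => S ≠ ∅),
        ∑ T ∈ S.powerset, (-1:ℝ) ^ (S.card - T.card) *
          ((if c T = ⊤ then 1
            else 1 - Real.exp (-(∑ i ∈ S, l i) * (c T).toReal)) / (∑ i ∈ S, l i)) := by
  classical
  have h1 : ∀ T ∈ (univ : Finset (Fin n)).powerset, T ≠ ∅ ∨ c T ≠ ⊤ := by
    intro T _
    rcases eq_or_ne T ∅ with rfl | hT
    · exact Or.inr hc
    · exact Or.inl hT
  rw [Finset.sum_congr rfl fun T hT => aux_IT_val l hl (c T) T (h1 T hT)]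
  rw [aux_swap (F := fun T S => (-1:ℝ)^(S.card - T.card) * JJ l S (c T))]
  have hmem : (∅ : Finset (Fin n)) ∈ (univ : Finset (Fin n)).powerset :=
    Finset.mem_powerset.2 (Finset.empty_subset _)
  rw [← Finset.add_sum_erase _ _ hmem]
  congr 1
  · rw [Finset.powerset_empty, Finset.sum_singleton]
    simp [JJ]
  · rw [Finset.filter_ne']
    refine Finset.sum_congr rfl fun S hS => ?_
    refine Finset.sum_congr rfl fun T _ => ?_
    rw [JJ, if_neg (Finset.mem_erase.1 hS).1]

lemma K_meas {Ω : Type*} [MeasurableSpace Ω] {n : ℕ}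
    (X : Fin n → Ω → ℝ≥0∞) (hX : ∀ i, Measurable (X i)) (t : ℝ) (T : Finset (Fin n)) :
    MeasurableSet {ω | Finset.univ.filter (fun i => ENNReal.ofReal t < X i ω) = T} := by
  classical
  have hset : {ω | Finset.univ.filter (fun i => ENNReal.ofReal t < X i ω) = T}
      = ⋂ i, (if i ∈ T then {ω | ENNReal.ofReal t < X i ω}
          else {ω | ENNReal.ofReal t < X i ω}ᶜ) := by
    ext ω
    simp only [Set.mem_setOf_eq, Finset.ext_iff, Finset.mem_filter, Finset.mem_univ, true_and,
      Set.mem_iInter]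
    refine forall_congr' fun i => ?_
    by_cases h : i ∈ T <;> simp [h]
  rw [hset]
  refine MeasurableSet.iInter fun i => ?_
  by_cases h : i ∈ T
  · rw [if_pos h]; exact (hX i) measurableSet_Ioi
  · rw [if_neg h]; exact ((hX i) measurableSet_Ioi).compl


/-- Mean time to failure of a coherent system under the exponential reliability
model: E[Y_p] = p(e_∅) + Σ_{∅≠S⊆[n]} Σ_{T⊆S} (−1)^{|S|−|T|} (1 − e^{−λ(S) p(e_T)})/λ(S),
where λ(S) = Σ_{i∈S} λ_i and, for p(e_T) = ∞, e^{−λ(S)·∞} is interpreted as 0. -/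
theorem mean_time_to_failure_exponential {Ω : Type*} [MeasurableSpace Ω]
    (μ : Measure Ω) [IsProbabilityMeasure μ] (n : ℕ)
    (X : Fin n → Ω → ℝ≥0∞) (hX : ∀ i, Measurable (X i))
    (hind : iIndepFun X μ)
    (l : Fin n → ℝ) (hl : ∀ i, 0 < l i)
    (hexp : ∀ i, ∀ t : ℝ, 0 ≤ t →
      (μ {ω | ENNReal.ofReal t < X i ω}).toReal = Real.exp (-(l i) * t))
    (p : (Fin n → ℝ≥0∞) → ℝ≥0∞) (hp : IsWLPE n p) :
    ∫⁻ ω, p (fun i => X i ω) ∂μ =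
      p (charVecE (∅ : Finset (Fin n))) + ENNReal.ofReal
        (∑ S ∈ ((Finset.univ (α := Fin n)).powerset.filter (fun S => S ≠ ∅)),
          ∑ T ∈ S.powerset, (-1 : ℝ) ^ (S.card - T.card) *
            ((if p (charVecE T) = ⊤ then 1
              else 1 - Real.exp (-(∑ i ∈ S, l i) * (p (charVecE T)).toReal)) /
              (∑ i ∈ S, l i))) := by
  classical
  by_cases hct : p (charVecE (∅ : Finset (Fin n))) = ⊤
  · have htop : ∀ ω, p (fun i => X i ω) = ⊤ := by
      intro ω
      have h0 : charVecE (∅ : Finset (Fin n)) ≤ fun i => X i ω := by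
        intro i; simp [charVecE]
      exact top_le_iff.1 (hct ▸ hp.monotone h0)
    rw [lintegral_congr htop, hct]
    simp [lintegral_const]
  -- main case
  set B : ℝ := (∑ S ∈ ((Finset.univ (α := Fin n)).powerset.filter (fun S => S ≠ ∅)),
          ∑ T ∈ S.powerset, (-1 : ℝ) ^ (S.card - T.card) *
            ((if p (charVecE T) = ⊤ then 1
              else 1 - Real.exp (-(∑ i ∈ S, l i) * (p (charVecE T)).toReal)) /
              (∑ i ∈ S, l i))) with hBdef
  set Y : Ω → ℝ≥0∞ := fun ω => p (fun i => X i ω) with hYdef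
  have hYm : Measurable Y := hp.measurable.comp (measurable_pi_lambda _ fun i => hX i)
  have hμXi : ∀ i, ∀ t : ℝ, 0 ≤ t →
      μ {ω | ENNReal.ofReal t < X i ω} = ENNReal.ofReal (Real.exp (-(l i) * t)) := by
    intro i t ht
    rw [← ENNReal.ofReal_toReal (measure_ne_top μ _), hexp i t ht]
  have hXtop : ∀ i, μ {ω | X i ω = ⊤} = 0 := by
    intro i
    have hle : ∀ k : ℕ, μ {ω | X i ω = ⊤} ≤ ENNReal.ofReal (Real.exp (-(l i) * k)) := by
      intro k
      rw [← hμXi i k (Nat.cast_nonneg k)]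
      refine measure_mono fun ω (h : X i ω = ⊤) => ?_
      simp only [Set.mem_setOf_eq, h]
      exact ENNReal.ofReal_lt_top
    have htend : Filter.Tendsto (fun k : ℕ => ENNReal.ofReal (Real.exp (-(l i) * k)))
        Filter.atTop (nhds 0) := by
      rw [← ENNReal.ofReal_zero]
      refine ENNReal.tendsto_ofReal ?_
      have h1 : Filter.Tendsto (fun x : ℝ => Real.exp (-(l i) * x)) Filter.atTop (nhds 0) :=
        Real.tendsto_exp_atBot.comp
          (Filter.tendsto_id.const_mul_atTop_of_neg (neg_neg_iff_pos.2 (hl i)))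
      exact h1.comp tendsto_natCast_atTop_atTop
    exact le_antisymm (ge_of_tendsto htend (Filter.Eventually.of_forall hle)) (zero_le)
  have hYtop : μ {ω | Y ω = ⊤} = 0 := by
    refine measure_mono_null ?_ (measure_iUnion_null fun i => hXtop i)
    intro ω (hω : Y ω = ⊤)
    have hb := hp.le_bound (fun i => X i ω)
    have h2 : p (charVecE (∅ : Finset (Fin n))) ⊔ (⨆ i, X i ω) = ⊤ :=
      top_le_iff.1 (hω ▸ hb)
    have hsup : (⨆ i, X i ω) = ⊤ := by
      by_contra hS
      exact absurd h2
        (sup_lt_iff.2 ⟨lt_top_iff_ne_top.2 hct, lt_top_iff_ne_top.2 hS⟩).ne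
    have hex : ∃ i, X i ω = ⊤ := by
      by_contra hno
      push_neg at hno
      rcases isEmpty_or_nonempty (Fin n) with hE | hNE
      · rw [iSup_of_empty] at hsup
        simp at hsup
      · obtain ⟨j, hj⟩ := Finite.exists_max (fun i => X i ω)
        exact hno j (top_le_iff.1 (hsup ▸ iSup_le hj))
    rcases hex with ⟨i, hi⟩
    exact Set.mem_iUnion.2 ⟨i, hi⟩
  have hae : ∀ᵐ ω ∂μ, Y ω ≠ ⊤ := by
    rw [ae_iff]
    simpa only [not_not] using hYtop
  -- nonnegativity of integrands
  have hnnT : ∀ T : Finset (Fin n),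
      0 ≤ᵐ[volume.restrict (Set.Ioi (0:ℝ))] fun t =>
        (if ENNReal.ofReal t < p (charVecE T) then
          (∏ i ∈ T, Real.exp (-(l i) * t)) *
            ∏ i ∈ Finset.univ \ T, (1 - Real.exp (-(l i) * t)) else 0) := by
    intro T
    refine (ae_restrict_iff' measurableSet_Ioi).2 (Filter.Eventually.of_forall fun t ht => ?_)
    show (0:ℝ) ≤ if ENNReal.ofReal t < p (charVecE T) then
      (∏ i ∈ T, Real.exp (-(l i) * t)) *
        ∏ i ∈ Finset.univ \ T, (1 - Real.exp (-(l i) * t)) else 0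
    by_cases h : ENNReal.ofReal t < p (charVecE T)
    · rw [if_pos h]
      refine mul_nonneg (Finset.prod_nonneg fun i _ => (Real.exp_pos _).le)
        (Finset.prod_nonneg fun i _ => ?_)
      have : Real.exp (-(l i) * t) ≤ 1 :=
        Real.exp_le_one_iff.2 (by nlinarith [hl i, ht.out])
      linarith
    · rw [if_neg h]
  have hTor : ∀ T : Finset (Fin n), T ≠ ∅ ∨ p (charVecE T) ≠ ⊤ := by
    intro T
    rcases eq_or_ne T ∅ with rfl | hT
    · exact Or.inr hct
    · exact Or.inl hT
  -- the chain
  have key : ∫⁻ ω, Y ω ∂μ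
      = ENNReal.ofReal ((p (charVecE (∅ : Finset (Fin n)))).toReal + B) := by
    calc ∫⁻ ω, Y ω ∂μ = ∫⁻ ω, ENNReal.ofReal ((Y ω).toReal) ∂μ := by
          refine lintegral_congr_ae ?_
          filter_upwards [hae] with ω h
          rw [ENNReal.ofReal_toReal h]
      _ = ∫⁻ t in Set.Ioi (0:ℝ), μ {ω | t < (Y ω).toReal} := by
          exact lintegral_eq_lintegral_meas_lt μ
            (Filter.Eventually.of_forall fun ω => ENNReal.toReal_nonneg)
            (hYm.ennreal_toReal.aemeasurable)
      _ = ∫⁻ t in Set.Ioi (0:ℝ), μ {ω | ENNReal.ofReal t < Y ω} := by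
          refine setLIntegral_congr_fun measurableSet_Ioi
            (fun t ht => ?_)
          refine measure_congr ?_
          rw [Filter.eventuallyEq_set]
          filter_upwards [hae] with ω h
          exact (ENNReal.ofReal_lt_iff_lt_toReal (le_of_lt ht) h).symm
      _ = ∫⁻ t in Set.Ioi (0:ℝ), ∑ T ∈ Finset.univ.powerset,
            (if ENNReal.ofReal t < p (charVecE T) then
              ENNReal.ofReal ((∏ i ∈ T, Real.exp (-(l i) * t)) *
                ∏ i ∈ Finset.univ \ T, (1 - Real.exp (-(l i) * t))) else 0) := by
          refine setLIntegral_congr_fun measurableSet_Ioi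
            (fun t ht => ?_)
          rw [aux_level μ X hX (fun T => p (charVecE T)) (fun t T => K_meas X hX t T) Y
            (fun t ω => hp.lt_iff (fun i => X i ω) (ENNReal.ofReal t)) t]
          refine Finset.sum_congr rfl fun T _ => ?_
          rw [aux_K_meas μ X hX hind l hl hexp t (le_of_lt ht) T]
      _ = ∑ T ∈ Finset.univ.powerset, ∫⁻ t in Set.Ioi (0:ℝ),
            (if ENNReal.ofReal t < p (charVecE T) then
              ENNReal.ofReal ((∏ i ∈ T, Real.exp (-(l i) * t)) *
                ∏ i ∈ Finset.univ \ T, (1 - Real.exp (-(l i) * t))) else 0) := by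
          refine lintegral_finset_sum _ fun T _ => ?_
          refine Measurable.ite (aux_mset _) ?_ measurable_const
          refine ENNReal.measurable_ofReal.comp (Continuous.measurable ?_)
          refine Continuous.mul ?_ ?_
          · exact continuous_finset_prod _ fun i _ =>
              Real.continuous_exp.comp (continuous_const.mul continuous_id)
          · exact continuous_finset_prod _ fun i _ =>
              continuous_const.sub (Real.continuous_exp.comp (continuous_const.mul continuous_id))
      _ = ∑ T ∈ Finset.univ.powerset, ENNReal.ofReal (∫ t in Set.Ioi (0:ℝ),
            (if ENNReal.ofReal t < p (charVecE T) then
              (∏ i ∈ T, Real.exp (-(l i) * t)) *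
                ∏ i ∈ Finset.univ \ T, (1 - Real.exp (-(l i) * t)) else 0)) := by
          refine Finset.sum_congr rfl fun T _ => ?_
          rw [MeasureTheory.ofReal_integral_eq_lintegral_ofReal
              (aux_IT_int l hl (p (charVecE T)) T (hTor T)) (hnnT T)]
          refine setLIntegral_congr_fun measurableSet_Ioi
            (fun t ht => ?_)
          by_cases h : ENNReal.ofReal t < p (charVecE T)
          · rw [if_pos h, if_pos h]
          · rw [if_neg h, if_neg h, ENNReal.ofReal_zero]
      _ = ENNReal.ofReal (∑ T ∈ Finset.univ.powerset, ∫ t in Set.Ioi (0:ℝ),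
            (if ENNReal.ofReal t < p (charVecE T) then
              (∏ i ∈ T, Real.exp (-(l i) * t)) *
                ∏ i ∈ Finset.univ \ T, (1 - Real.exp (-(l i) * t)) else 0)) := by
          rw [ENNReal.ofReal_sum_of_nonneg]
          intro T _
          exact integral_nonneg_of_ae (hnnT T)
      _ = ENNReal.ofReal ((p (charVecE (∅ : Finset (Fin n)))).toReal + B) := by
          congr 1
          exact aux_total l hl (fun T => p (charVecE T)) hct
  -- lower bound and conclusion
  have hTot : (∑ T ∈ Finset.univ.powerset, ∫ t in Set.Ioi (0:ℝ),
      (if ENNReal.ofReal t < p (charVecE T) then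
        (∏ i ∈ T, Real.exp (-(l i) * t)) *
          ∏ i ∈ Finset.univ \ T, (1 - Real.exp (-(l i) * t)) else 0))
      = (p (charVecE (∅ : Finset (Fin n)))).toReal + B :=
    aux_total l hl (fun T => p (charVecE T)) hct
  have hITnn : (0:ℝ) ≤ ∑ T ∈ Finset.univ.powerset, ∫ t in Set.Ioi (0:ℝ),
      (if ENNReal.ofReal t < p (charVecE T) then
        (∏ i ∈ T, Real.exp (-(l i) * t)) *
          ∏ i ∈ Finset.univ \ T, (1 - Real.exp (-(l i) * t)) else 0) :=
    Finset.sum_nonneg fun T _ => integral_nonneg_of_ae (hnnT T)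
  have htotnn : 0 ≤ (p (charVecE (∅ : Finset (Fin n)))).toReal + B := hTot ▸ hITnn
  have hlow : p (charVecE (∅ : Finset (Fin n))) ≤ ∫⁻ ω, Y ω ∂μ := by
    calc p (charVecE (∅ : Finset (Fin n)))
        = ∫⁻ _, p (charVecE (∅ : Finset (Fin n))) ∂μ := by simp [lintegral_const]
      _ ≤ ∫⁻ ω, Y ω ∂μ := lintegral_mono fun ω => hp.monotone (fun i => by simp [charVecE])
  have hle2 : ENNReal.ofReal ((p (charVecE (∅ : Finset (Fin n)))).toReal)
      ≤ ENNReal.ofReal ((p (charVecE (∅ : Finset (Fin n)))).toReal + B) := by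
    rw [ENNReal.ofReal_toReal hct]
    exact key ▸ hlow
  have hBnn : 0 ≤ B := by
    have := (ENNReal.ofReal_le_ofReal_iff htotnn).1 hle2
    linarith
  rw [key, ENNReal.ofReal_add ENNReal.toReal_nonneg hBnn, ENNReal.ofReal_toReal hct]
end
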